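/- arXiv:2407.11331 — 4 statements merged into one kernel-verified Lean document; each statement's English description precedes it below -/
import Mathlib

section
/- Let B be a 1-unconditional convex body in ℝ^n and let x ∈ ∂B. Then every direction d ∈ ℝ^n with 𝒵_d = 𝒵_x and d_i·x_i < 0 for all i ∉ 𝒵_x illuminates x. Consequently, the set {−1,0,1}^n ∖ {0} illuminates B; and if B is cubelike, then the set {−1,1}^n illuminates B, so that 𝕀(B) ≤ 2^n. -/
open Set

/-- A convex body in `ℝ^n`: a compact convex set with nonempty interior. -/
def IsConvexBody {n : ℕ} (K : Set (Fin n → ℝ)) : Prop :=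
  Convex ℝ K ∧ IsCompact K ∧ (interior K).Nonempty

/-- `K` is 1-unconditional: closed under sign changes of the coordinates. -/
def Unconditional {n : ℕ} (K : Set (Fin n → ℝ)) : Prop :=
  ∀ x ∈ K, ∀ ε : Fin n → ℝ, (∀ i, ε i = 1 ∨ ε i = -1) → (fun i => ε i * x i) ∈ K

/-- The direction `d` illuminates the (boundary) point `x` of `K`. -/
def Illuminates {n : ℕ} (K : Set (Fin n → ℝ)) (d x : Fin n → ℝ) : Prop :=
  ∃ ε : ℝ, 0 < ε ∧ x + ε • d ∈ interior K

/-- The set of directions `D` illuminates every boundary point of `K`. -/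
def IlluminatesSet {n : ℕ} (K : Set (Fin n → ℝ)) (D : Set (Fin n → ℝ)) : Prop :=
  ∀ x ∈ frontier K, ∃ d ∈ D, Illuminates K d x

/-- The illumination number: smallest cardinality of a set of nonzero directions
illuminating `K`. -/
noncomputable def illumNumber {n : ℕ} (K : Set (Fin n → ℝ)) : ℕ :=
  sInf {m | ∃ D : Finset (Fin n → ℝ), D.card = m ∧ (∀ d ∈ D, d ≠ 0) ∧
    IlluminatesSet K ↑D}

/-- A parallelepiped: an affine image of the cube `[-1,1]^n`. -/
def IsParallelepiped {n : ℕ} (K : Set (Fin n → ℝ)) : Prop :=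
  ∃ T : (Fin n → ℝ) ≃ᵃ[ℝ] (Fin n → ℝ),
    K = T '' (Set.Icc (fun _ => (-1 : ℝ)) (fun _ => 1))

/-- The standard basis vector `e i`. -/
def stdB {n : ℕ} (i : Fin n) : Fin n → ℝ := Pi.single i 1

/-- The class `𝒰^n`: 1-unconditional convex bodies all of whose standard basis
vectors lie on the boundary. -/
def memU {n : ℕ} (K : Set (Fin n → ℝ)) : Prop :=
  IsConvexBody K ∧ Unconditional K ∧ ∀ i : Fin n, stdB i ∈ frontier K

/-- A 1-unconditional body is cubelike if all its extreme points have all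
coordinates nonzero. -/
def Cubelike {n : ℕ} (K : Set (Fin n → ℝ)) : Prop :=
  ∀ x ∈ Set.extremePoints ℝ K, ∀ i, x i ≠ 0

/-- The all-ones vector `𝟙`. -/
def allOnes {n : ℕ} : Fin n → ℝ := fun _ => 1

-- sign flip at a set of coordinates keeps membership
lemma uncond_flip {n : ℕ} {B : Set (Fin n → ℝ)} (hu : Unconditional B)
    {x : Fin n → ℝ} (hx : x ∈ B) (S : Finset (Fin n)) :
    (fun i => if i ∈ S then -x i else x i) ∈ B := by
  have := hu x hx (fun i => if i ∈ S then -1 else 1) (by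
    intro i; by_cases h : i ∈ S <;> simp [h])
  convert this using 1
  funext i; by_cases h : i ∈ S <;> simp [h]

lemma uncond_neg_mem {n : ℕ} {B : Set (Fin n → ℝ)} (hu : Unconditional B)
    {x : Fin n → ℝ} (hx : x ∈ B) : -x ∈ B := by
  have := uncond_flip hu hx Finset.univ
  convert this using 1; funext i; simp

lemma zero_mem_interior {n : ℕ} {B : Set (Fin n → ℝ)}
    (hconv : Convex ℝ B) (hu : Unconditional B) (hint : (interior B).Nonempty) :
    (0 : Fin n → ℝ) ∈ interior B := by
  obtain ⟨p, hp⟩ := hint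
  have hBneg : -B = B := by
    ext y; constructor
    · intro hy
      have : -y ∈ B := Set.mem_neg.1 hy
      simpa using uncond_neg_mem hu this
    · intro hy
      exact Set.mem_neg.2 (uncond_neg_mem hu hy)
  have hnp : -p ∈ interior B := by
    have h := Homeomorph.neg (Fin n → ℝ)
    have h1 : (Homeomorph.neg (Fin n → ℝ)) '' interior B = interior ((Homeomorph.neg (Fin n → ℝ)) '' B) :=
      Homeomorph.image_interior _ _
    have h2 : (Homeomorph.neg (Fin n → ℝ)) '' B = B := by
      ext y
      simp only [Homeomorph.neg, Equiv.neg, Set.mem_image]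
      constructor
      · rintro ⟨z, hz, rfl⟩
        exact uncond_neg_mem hu hz
      · intro hy
        exact ⟨-y, uncond_neg_mem hu hy, by simp⟩
    rw [h2] at h1
    have : (Homeomorph.neg (Fin n → ℝ)) p ∈ interior B := by
      rw [← h1]; exact ⟨p, hp, rfl⟩
    simpa using this
  have hmem := hconv.interior hp hnp (by norm_num : (0:ℝ) ≤ 1/2) (by norm_num : (0:ℝ) ≤ 1/2) (by norm_num)
  have heq : (1/2 : ℝ) • p + (1/2 : ℝ) • (-p) = 0 := by
    rw [smul_neg, add_neg_cancel]
  rwa [heq] at hmem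

-- solidity: if |z i| ≤ |x i| for all i and x ∈ B then z ∈ B
lemma uncond_solid {n : ℕ} {B : Set (Fin n → ℝ)} (hconv : Convex ℝ B)
    (hu : Unconditional B) {x : Fin n → ℝ} (hx : x ∈ B)
    {z : Fin n → ℝ} (hz : ∀ i, |z i| ≤ |x i|) : z ∈ B := by
  classical
  suffices h : ∀ S : Finset (Fin n), ∀ z : Fin n → ℝ,
      (∀ i, |z i| ≤ |x i|) → (∀ i ∉ S, z i = x i) → z ∈ B by
    exact h Finset.univ z hz (by simp)
  intro S
  induction S using Finset.induction with
  | empty =>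
    intro z _ h2
    have : z = x := funext fun i => h2 i (by simp)
    rwa [this]
  | insert j S' hjS ih =>
    intro z h1 h2
    by_cases hxj : x j = 0
    · have hzj : z j = x j := by
        have := h1 j; rw [hxj] at this; simp at this; rw [this, hxj]
      have : z ∈ B := by
        apply ih z h1
        intro i hi
        by_cases hij : i = j
        · subst hij; exact hzj
        · exact h2 i (by simp [hij, hi])
      exact this
    · set z' := Function.update z j (x j) with hz'
      have hz'B : z' ∈ B := by
        apply ih
        · intro i
          by_cases hij : i = j
          · subst hij; simp [hz', Function.update_self]
          · simp [hz', Function.update_of_ne hij]; exact h1 i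
        · intro i hi
          by_cases hij : i = j
          · subst hij; simp [hz', Function.update_self]
          · rw [hz', Function.update_of_ne hij]
            exact h2 i (by simp [hij, hi])
      have hz''B : (fun i => if i = j then -x j else z i) ∈ B := by
        have := uncond_flip hu hz'B {j}
        convert this using 1
        funext i
        by_cases hij : i = j <;> simp [hij, hz', Function.update_of_ne]
      -- convex combination
      set a : ℝ := (z j / x j + 1) / 2 with ha
      have habs : |z j / x j| ≤ 1 := by
        rw [abs_div]
        rw [div_le_one (abs_pos.2 hxj)]
        exact h1 j
      have ha0 : 0 ≤ a := by
        have := abs_le.1 habs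
        simp only [ha]; linarith [this.1]
      have ha1 : a ≤ 1 := by
        have := abs_le.1 habs
        simp only [ha]; linarith [this.2]
      have hcomb := hconv hz'B hz''B ha0 (by linarith : (0:ℝ) ≤ 1 - a) (by ring)
      convert hcomb using 1
      funext i
      by_cases hij : i = j
      · subst hij
        simp only [Pi.add_apply, Pi.smul_apply, smul_eq_mul, hz', Function.update_self, if_pos rfl, ↓reduceIte]
        rw [ha]
        field_simp
        ring
      · simp only [Pi.add_apply, Pi.smul_apply, smul_eq_mul, hz', Function.update_of_ne hij,
          if_neg hij]
        ring

lemma solid_interior {n : ℕ} {B : Set (Fin n → ℝ)} (hconv : Convex ℝ B)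
    (hu : Unconditional B) (h0 : (0 : Fin n → ℝ) ∈ interior B)
    {w z : Fin n → ℝ} (hw : w ∈ B) {t : ℝ} (ht0 : 0 < t) (ht1 : t < 1)
    (hz : ∀ i, |z i| ≤ (1 - t) * |w i|) : z ∈ interior B := by
  have h1t : (0:ℝ) < 1 - t := by linarith
  set u : Fin n → ℝ := (1 - t)⁻¹ • z with hu'
  have huB : u ∈ B := by
    apply uncond_solid hconv hu hw
    intro i
    simp only [hu', Pi.smul_apply, smul_eq_mul, abs_mul, abs_of_pos (inv_pos.2 h1t)]
    rw [inv_mul_le_iff₀ h1t]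
    exact hz i
  have hcomb := hconv.combo_interior_closure_mem_interior h0 (subset_closure huB)
    ht0 (le_of_lt h1t) (by ring)
  have heq : t • (0 : Fin n → ℝ) + (1 - t) • u = z := by
    rw [smul_zero, zero_add, hu', smul_inv_smul₀ (ne_of_gt h1t)]
  rwa [heq] at hcomb

lemma illum_key {n : ℕ} {B : Set (Fin n → ℝ)} (hconv : Convex ℝ B)
    (hu : Unconditional B) (h0 : (0 : Fin n → ℝ) ∈ interior B)
    {x w d : Fin n → ℝ} (hw : w ∈ B)
    (hx : ∀ i, x i ≠ 0 → w i = x i ∧ d i * x i < 0)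
    (hzc : ∀ i, x i = 0 → d i = 0 ∨ w i ≠ 0) :
    ∃ ε : ℝ, 0 < ε ∧ x + ε • d ∈ interior B := by
  classical
  set P : Finset (Fin n) := Finset.univ.filter (fun i => d i ≠ 0) with hP
  set E1 : Finset ℝ :=
    insert (1:ℝ) (P.image (fun i => (if x i = 0 then |w i| else |x i|) / |d i|)) with hE1
  have hE1ne : E1.Nonempty := ⟨1, Finset.mem_insert_self _ _⟩
  set ε : ℝ := E1.min' hE1ne / 2 with hε
  have hεpos : 0 < ε := by
    have : ∀ a ∈ E1, 0 < a := by
      intro a ha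
      rcases Finset.mem_insert.1 ha with h | h
      · rw [h]; norm_num
      · obtain ⟨i, hiP, rfl⟩ := Finset.mem_image.1 h
        have hdi : d i ≠ 0 := (Finset.mem_filter.1 hiP).2
        apply div_pos _ (abs_pos.2 hdi)
        by_cases hxi : x i = 0
        · simp only [hxi, if_true, if_pos]
          rcases hzc i hxi with h' | h'
          · exact absurd h' hdi
          · exact abs_pos.2 h'
        · simp only [hxi, if_false]
          exact abs_pos.2 hxi
    have := (Finset.lt_min'_iff E1 hE1ne).2 this
    simp only [hε]; linarith
  have hεle : ∀ i, d i ≠ 0 → ε * |d i| ≤ (if x i = 0 then |w i| else |x i|) / 2 := by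
    intro i hdi
    have hmem : (if x i = 0 then |w i| else |x i|) / |d i| ∈ E1 := by
      apply Finset.mem_insert_of_mem
      exact Finset.mem_image.2 ⟨i, Finset.mem_filter.2 ⟨Finset.mem_univ _, hdi⟩, rfl⟩
    have h1 := Finset.min'_le E1 _ hmem
    have hd : (0:ℝ) < |d i| := abs_pos.2 hdi
    rw [hε]
    rw [div_mul_eq_mul_div, div_le_div_iff₀ (by norm_num) (by norm_num : (0:ℝ) < 2)]
    calc E1.min' hE1ne * |d i| * 2 ≤ ((if x i = 0 then |w i| else |x i|) / |d i|) * |d i| * 2 := by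
          nlinarith
      _ = (if x i = 0 then |w i| else |x i|) * 2 := by
          rw [div_mul_cancel₀ _ (ne_of_gt hd)]
  set Q : Finset (Fin n) := Finset.univ.filter (fun i => x i ≠ 0) with hQ
  set T1 : Finset ℝ := insert ((1:ℝ)/2) (Q.image (fun i => ε * |d i| / |x i|)) with hT1
  have hT1ne : T1.Nonempty := ⟨1/2, Finset.mem_insert_self _ _⟩
  set t : ℝ := T1.min' hT1ne with htdef
  have ht0 : 0 < t := by
    have : ∀ a ∈ T1, 0 < a := by
      intro a ha
      rcases Finset.mem_insert.1 ha with h | h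
      · rw [h]; norm_num
      · obtain ⟨i, hiQ, rfl⟩ := Finset.mem_image.1 h
        have hxi : x i ≠ 0 := (Finset.mem_filter.1 hiQ).2
        have hdi : d i ≠ 0 := by
          intro h'
          have := (hx i hxi).2
          rw [h'] at this; simp at this
        exact div_pos (mul_pos hεpos (abs_pos.2 hdi)) (abs_pos.2 hxi)
    have := (Finset.lt_min'_iff T1 hT1ne).2 this
    linarith
  have ht12 : t ≤ 1/2 := Finset.min'_le T1 _ (Finset.mem_insert_self _ _)
  have htle : ∀ i, x i ≠ 0 → t * |x i| ≤ ε * |d i| := by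
    intro i hxi
    have hmem : ε * |d i| / |x i| ∈ T1 := by
      apply Finset.mem_insert_of_mem
      exact Finset.mem_image.2 ⟨i, Finset.mem_filter.2 ⟨Finset.mem_univ _, hxi⟩, rfl⟩
    have h1 := Finset.min'_le T1 _ hmem
    rw [← le_div_iff₀ (abs_pos.2 hxi)]
    exact h1
  refine ⟨ε, hεpos, ?_⟩
  apply solid_interior hconv hu h0 hw ht0 (by linarith : t < 1)
  intro i
  simp only [Pi.add_apply, Pi.smul_apply, smul_eq_mul]
  by_cases hxi : x i = 0
  · rcases hzc i hxi with hdi | hwi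
    · rw [hxi, hdi]
      simp only [mul_zero, add_zero, abs_zero]
      exact mul_nonneg (by linarith) (abs_nonneg _)
    · have hdi : d i = 0 ∨ d i ≠ 0 := em _
      rcases hdi with hdi | hdi
      · rw [hxi, hdi]; simp only [mul_zero, add_zero, abs_zero]
        exact mul_nonneg (by linarith) (abs_nonneg _)
      · have h1 := hεle i hdi
        rw [if_pos hxi] at h1
        rw [hxi, zero_add, abs_mul, abs_of_pos hεpos]
        nlinarith [abs_nonneg (w i)]
  · obtain ⟨hwx, hdx⟩ := hx i hxi
    have hdi : d i ≠ 0 := by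
      intro h'; rw [h'] at hdx; simp at hdx
    have h1 := hεle i hdi
    rw [if_neg hxi] at h1
    have h2 := htle i hxi
    rw [hwx]
    rcases lt_trichotomy (x i) 0 with hneg | hzero | hpos
    · have hdpos : 0 < d i := by
        rcases (mul_neg_iff.1 hdx) with ⟨h3, h4⟩ | ⟨h3, h4⟩
        · exact h3
        · linarith
      rw [abs_of_neg hneg] at h1 h2 ⊢
      rw [abs_of_pos hdpos] at h1 h2
      rw [abs_le]
      constructor <;> nlinarith
    · exact absurd hzero hxi
    · have hdneg : d i < 0 := by
        rcases (mul_neg_iff.1 hdx) with ⟨h3, h4⟩ | ⟨h3, h4⟩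
        · linarith
        · exact h3
      rw [abs_of_pos hpos] at h1 h2 ⊢
      rw [abs_of_neg hdneg] at h1 h2
      rw [abs_le]
      constructor <;> nlinarith

open Module

-- supporting functional at a non-interior point
lemma frontier_face {E : Type} [NormedAddCommGroup E] [NormedSpace ℝ E]
    {s : Set E} (hconv : Convex ℝ s) {a₀ w : E}
    (ha₀ : a₀ ∈ interior s) (hw : w ∈ s) (hwf : w ∉ interior s) :
    ∃ l : E →L[ℝ] ℝ, l a₀ < l w ∧ ∀ y ∈ s, l y ≤ l w := by
  obtain ⟨l, hl⟩ := geometric_hahn_banach_open_point hconv.interior isOpen_interior hwf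
  refine ⟨l, hl a₀ ha₀, ?_⟩
  intro y hy
  by_contra hgt
  push_neg at hgt
  have hlaw : l a₀ < l w := hl a₀ ha₀
  set D : ℝ := l y - l a₀ with hD
  set δ : ℝ := l y - l w with hδ
  have hδpos : 0 < δ := by simp [hδ]; linarith
  have hDpos : 0 < D := by simp [hD]; linarith
  have hδD : δ ≤ D := by simp [hδ, hD]; linarith
  set θ : ℝ := δ / (2 * D) with hθ
  have hθpos : 0 < θ := by positivity
  have hθlt : θ < 1 := by
    rw [hθ, div_lt_one (by linarith)]
    linarith
  have hmem : θ • a₀ + (1 - θ) • y ∈ interior s :=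
    hconv.combo_interior_closure_mem_interior ha₀ (subset_closure hy) hθpos
      (by linarith) (by ring)
  have := hl _ hmem
  rw [map_add, map_smul, map_smul] at this
  simp only [smul_eq_mul] at this
  have hcomp : θ * l a₀ + (1 - θ) * l y = l y - θ * D := by
    simp [hD]; ring
  rw [hcomp] at this
  have hθD : θ * D = δ / 2 := by
    rw [hθ]; field_simp
  rw [hθD] at this
  simp [hδ] at this
  linarith

-- transporting the problem to a subspace
lemma transport_hull {E : Type} [NormedAddCommGroup E] [NormedSpace ℝ E]
    [FiniteDimensional ℝ E] {N : ℕ}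
    (ih : ∀ (E' : Type) [NormedAddCommGroup E'] [NormedSpace ℝ E']
      [FiniteDimensional ℝ E'], Module.finrank ℝ E' ≤ N → ∀ s : Set E',
      IsCompact s → Convex ℝ s → s ⊆ convexHull ℝ (s.extremePoints ℝ))
    (V : Submodule ℝ E) (hV : Module.finrank ℝ V ≤ N) (w : E) (G : Set E)
    (hGV : ∀ y ∈ G, y - w ∈ V) (hcomp : IsCompact G) (hconv : Convex ℝ G) :
    G ⊆ convexHull ℝ (G.extremePoints ℝ) := by
  classical
  set fa : ↥V →ᵃ[ℝ] E := V.subtype.toAffineMap + AffineMap.const ℝ ↥V w with hfa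
  have hfaapp : ∀ u : ↥V, fa u = (u : E) + w := fun u => rfl
  have hfacont : Continuous fa := by
    have h : ⇑fa = fun u : ↥V => (u : E) + w := funext hfaapp
    rw [h]
    exact continuous_subtype_val.add continuous_const
  have hfainj : Function.Injective fa := by
    intro u v huv
    rw [hfaapp, hfaapp] at huv
    exact Subtype.ext (add_right_cancel huv)
  set t : Set ↥V := fa ⁻¹' G with ht
  have himg : fa '' t = G := by
    apply Set.Subset.antisymm
    · rintro _ ⟨u, hu, rfl⟩; exact hu
    · intro y hy
      refine ⟨⟨y - w, hGV y hy⟩, ?_, ?_⟩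
      · show fa _ ∈ G
        rw [hfaapp]; simpa using hy
      · rw [hfaapp]; simp
  have htconv : Convex ℝ t := hconv.affine_preimage fa
  have htcomp : IsCompact t := by
    obtain ⟨R, hR⟩ := hcomp.isBounded.subset_closedBall 0
    have hsub : t ⊆ Metric.closedBall (0 : ↥V) (R + ‖w‖) := by
      intro u hu
      have h1 : fa u ∈ Metric.closedBall (0:E) R := hR hu
      rw [Metric.mem_closedBall, dist_zero_right] at h1 ⊢
      rw [hfaapp] at h1
      have h2 : ‖(u:E)‖ ≤ R + ‖w‖ := by
        have h3 := norm_sub_le ((u:E) + w) w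
        simp only [add_sub_cancel_right] at h3
        linarith
      simpa [Submodule.coe_norm] using h2
    exact Metric.isCompact_of_isClosed_isBounded (hcomp.isClosed.preimage hfacont)
      (Metric.isBounded_closedBall.subset hsub)
  have hthull := ih ↥V hV t htcomp htconv
  have hext : fa '' (t.extremePoints ℝ) ⊆ G.extremePoints ℝ := by
    rintro _ ⟨e, he, rfl⟩
    refine ⟨himg ▸ ⟨e, he.1, rfl⟩, ?_⟩
    intro y hy z hz hseg
    obtain ⟨uy, huy, rfl⟩ := himg.symm ▸ hy
    obtain ⟨uz, huz, rfl⟩ := himg.symm ▸ hz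
    rw [← image_openSegment ℝ fa] at hseg
    obtain ⟨m, hm, hme⟩ := hseg
    have hmm : m = e := hfainj hme
    rw [hmm] at hm
    exact congrArg fa (he.2 huy huz hm)
  intro y hy
  have hu : (⟨y - w, hGV y hy⟩ : ↥V) ∈ t := by
    show fa _ ∈ G
    rw [hfaapp]; simpa using hy
  have := hthull hu
  have hyim : y ∈ fa '' (convexHull ℝ (t.extremePoints ℝ)) :=
    ⟨_, this, by rw [hfaapp]; simp⟩
  rw [AffineMap.image_convexHull] at hyim
  exact convexHull_mono hext hyim

theorem minkowski_aux : ∀ (N : ℕ) (E : Type) [NormedAddCommGroup E] [NormedSpace ℝ E]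
    [FiniteDimensional ℝ E], Module.finrank ℝ E ≤ N → ∀ s : Set E,
    IsCompact s → Convex ℝ s → s ⊆ convexHull ℝ (s.extremePoints ℝ) := by
  intro N
  induction N with
  | zero =>
    intro E _ _ _ hrank s _ _ x hx
    have hsub : Subsingleton E := by
      rw [Nat.le_zero] at hrank
      exact finrank_zero_iff.1 hrank
    exact subset_convexHull ℝ _ ⟨hx, fun y hy z hz _ =>
      Subsingleton.elim y x⟩
  | succ N ih =>
    intro E _ _ _ hrank s hcomp hconv
    by_cases hsub : Subsingleton E
    · intro x hx
      exact subset_convexHull ℝ _ ⟨hx, fun y hy z hz _ =>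
        Subsingleton.elim y x⟩
    by_cases hint : (interior s).Nonempty
    · -- full-dimensional case
      obtain ⟨a₀, ha₀⟩ := hint
      have hbd : ∀ w ∈ s, w ∉ interior s → w ∈ convexHull ℝ (s.extremePoints ℝ) := by
        intro w hws hwint
        obtain ⟨l, hla, hle⟩ := frontier_face hconv ha₀ hws hwint
        set G : Set E := {y ∈ s | l y = l w} with hG
        have hGexp : IsExposed ℝ s G := by
          intro _
          refine ⟨l, ?_⟩
          ext y
          constructor
          · rintro ⟨hy, hly⟩
            exact ⟨hy, fun z hz => by rw [hly]; exact hle z hz⟩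
          · rintro ⟨hy, hmax⟩
            exact ⟨hy, le_antisymm (hle y hy) (hmax w hws)⟩
        have hGextreme : IsExtreme ℝ s G := hGexp.isExtreme
        have hGcomp : IsCompact G := by
          have : G = s ∩ (l ⁻¹' {l w}) := by
            ext y; simp [hG, Set.mem_sep_iff]
          rw [this]
          exact hcomp.inter_right (isClosed_singleton.preimage l.continuous)
        have hGconv : Convex ℝ G := hGexp.convex hconv
        have hker : Module.finrank ℝ (LinearMap.ker (l : E →ₗ[ℝ] ℝ)) ≤ N := by
          have h1 := LinearMap.finrank_range_add_finrank_ker (l : E →ₗ[ℝ] ℝ)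
          have hsurj : Function.Surjective (l : E →ₗ[ℝ] ℝ) := by
            intro c
            have hlv : l (w - a₀) ≠ 0 := by
              rw [map_sub]; intro h; apply absurd hla; intro _; linarith [sub_eq_zero.1 h]
            refine ⟨(c / l (w - a₀)) • (w - a₀), ?_⟩
            simp only [LinearMap.coe_coe, map_smul, smul_eq_mul]
            rw [map_sub] at hlv ⊢
            field_simp
            simp
          have hrange : LinearMap.range (l : E →ₗ[ℝ] ℝ) = ⊤ := LinearMap.range_eq_top.2 hsurj
          rw [hrange] at h1
          simp only [finrank_top] at h1
          have : Module.finrank ℝ ℝ = 1 := Module.finrank_self ℝ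
          omega
        have hGV : ∀ y ∈ G, y - w ∈ LinearMap.ker (l : E →ₗ[ℝ] ℝ) := by
          rintro y ⟨hy, hly⟩
          simp only [LinearMap.mem_ker, LinearMap.coe_coe, map_sub]
          simp only [ContinuousLinearMap.coe_coe] at hly ⊢
          rw [hly, sub_self]
        have htrans := transport_hull ih (LinearMap.ker (l : E →ₗ[ℝ] ℝ)) hker w G hGV
          hGcomp hGconv
        have hwG : w ∈ G := ⟨hws, rfl⟩
        exact convexHull_mono hGextreme.extremePoints_subset_extremePoints (htrans hwG)
      intro x hx
      by_cases hxint : x ∈ interior s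
      · -- interior point: maximal chord
        have hnt : Nontrivial E := not_subsingleton_iff_nontrivial.1 hsub
        obtain ⟨v, hv⟩ := exists_ne (0 : E)
        set A : Set ℝ := {r : ℝ | x + r • v ∈ s} with hA
        have hAcont : Continuous (fun r : ℝ => x + r • v) :=
          continuous_const.add (continuous_id.smul continuous_const)
        have hAclosed : IsClosed A := hcomp.isClosed.preimage hAcont
        have hAbdd : Bornology.IsBounded A := by
          obtain ⟨R, hR⟩ := hcomp.isBounded.subset_closedBall 0
          have : A ⊆ Metric.closedBall (0:ℝ) ((R + ‖x‖) / ‖v‖) := by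
            intro r hr
            have h1 : ‖x + r • v‖ ≤ R := by
              have := hR hr
              rwa [Metric.mem_closedBall, dist_zero_right] at this
            have h2 : ‖r • v‖ ≤ ‖x + r • v‖ + ‖x‖ := by
              have h3 := norm_sub_le (x + r • v) x
              simp only [add_sub_cancel_left] at h3
              linarith
            rw [norm_smul, Real.norm_eq_abs] at h2
            rw [Metric.mem_closedBall, dist_zero_right, Real.norm_eq_abs]
            rw [le_div_iff₀ (norm_pos_iff.2 hv)]
            linarith
          exact Metric.isBounded_closedBall.subset this
        have hAcomp : IsCompact A := Metric.isCompact_of_isClosed_isBounded hAclosed hAbdd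
        have hAne : A.Nonempty := ⟨0, by simp [hA, hx]⟩
        set tp := sSup A with htp
        set tm := sInf A with htm
        have htpA : tp ∈ A := hAcomp.sSup_mem hAne
        have htmA : tm ∈ A := hAcomp.sInf_mem hAne
        -- x interior gives small ball: tp > 0 > tm
        obtain ⟨δ, hδpos, hδball⟩ := Metric.isOpen_iff.1 isOpen_interior x hxint
        have hnv : (0:ℝ) < ‖v‖ := norm_pos_iff.2 hv
        have hδmem : ∀ r : ℝ, |r| < δ / ‖v‖ → r ∈ A := by
          intro r hr
          show x + r • v ∈ s
          apply interior_subset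
          apply hδball
          rw [Metric.mem_ball, dist_self_add_left, norm_smul, Real.norm_eq_abs]
          calc |r| * ‖v‖ < δ / ‖v‖ * ‖v‖ := by
                apply mul_lt_mul_of_pos_right hr (norm_pos_iff.2 hv)
            _ = δ := by field_simp
        have hδv : 0 < δ / ‖v‖ := div_pos hδpos (norm_pos_iff.2 hv)
        have htppos : 0 < tp := by
          have : δ / ‖v‖ / 2 ∈ A := hδmem _ (by rw [abs_of_pos (by positivity)]; linarith)
          have h1 := le_csSup hAbdd.bddAbove this
          linarith
        have htmneg : tm < 0 := by
          have : -(δ / ‖v‖ / 2) ∈ A := hδmem _ (by rw [abs_neg, abs_of_pos (by positivity)]; linarith)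
          have h1 := csInf_le hAbdd.bddBelow this
          linarith
        set p := x + tp • v with hp
        set q := x + tm • v with hq
        have hpnint : p ∉ interior s := by
          intro hpint
          obtain ⟨δ', hδ'pos, hδ'ball⟩ := Metric.isOpen_iff.1 isOpen_interior p hpint
          have : tp + δ' / ‖v‖ / 2 ∈ A := by
            show x + (tp + δ' / ‖v‖ / 2) • v ∈ s
            apply interior_subset
            apply hδ'ball
            rw [Metric.mem_ball, hp]
            have heq : x + (tp + δ' / ‖v‖ / 2) • v = (x + tp • v) + (δ' / ‖v‖ / 2) • v := by
              rw [add_smul]; abel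
            rw [heq, dist_self_add_left, norm_smul, Real.norm_eq_abs]
            have h2 : (0:ℝ) < δ' / ‖v‖ / 2 := div_pos (div_pos hδ'pos hnv) two_pos
            rw [abs_of_pos h2]
            calc δ' / ‖v‖ / 2 * ‖v‖ = δ' / 2 := by field_simp
              _ < δ' := by linarith
          have h1 := le_csSup hAbdd.bddAbove this
          have h2 : (0:ℝ) < δ' / ‖v‖ / 2 := div_pos (div_pos hδ'pos hnv) two_pos
          simp only [← htp] at h1
          linarith
        have hqnint : q ∉ interior s := by
          intro hqint
          obtain ⟨δ', hδ'pos, hδ'ball⟩ := Metric.isOpen_iff.1 isOpen_interior q hqint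
          have : tm - δ' / ‖v‖ / 2 ∈ A := by
            show x + (tm - δ' / ‖v‖ / 2) • v ∈ s
            apply interior_subset
            apply hδ'ball
            rw [Metric.mem_ball, hq]
            have heq : x + (tm - δ' / ‖v‖ / 2) • v = (x + tm • v) + (-(δ' / ‖v‖ / 2)) • v := by
              rw [neg_smul, sub_smul]; abel
            rw [heq, dist_self_add_left, norm_smul, Real.norm_eq_abs]
            have h2 : (0:ℝ) < δ' / ‖v‖ / 2 := div_pos (div_pos hδ'pos hnv) two_pos
            rw [abs_neg, abs_of_pos h2]
            calc δ' / ‖v‖ / 2 * ‖v‖ = δ' / 2 := by field_simp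
              _ < δ' := by linarith
          have h1 := csInf_le hAbdd.bddBelow this
          have h2 : (0:ℝ) < δ' / ‖v‖ / 2 := div_pos (div_pos hδ'pos hnv) two_pos
          simp only [← htm] at h1
          linarith
        have hphull := hbd p htpA hpnint
        have hqhull := hbd q htmA hqnint
        -- x is a convex combination of q and p
        have hdenom : 0 < tp - tm := by linarith
        set a : ℝ := tp / (tp - tm) with ha
        set b : ℝ := -tm / (tp - tm) with hb
        have ha0 : 0 ≤ a := by positivity
        have hb0 : 0 ≤ b := by
          rw [hb]; apply div_nonneg _ (le_of_lt hdenom); linarith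
        have hab : a + b = 1 := by
          rw [ha, hb]
          field_simp
          ring
        have hD0 : tp - tm ≠ 0 := ne_of_gt hdenom
        have hcombo := (convex_convexHull ℝ (s.extremePoints ℝ)) hqhull hphull ha0 hb0 hab
        have heq : a • q + b • p = x := by
          rw [hq, hp, smul_add, smul_add]
          have h1 : a • x + b • x = x := by rw [← add_smul, hab, one_smul]
          have h2 : a • tm • v + b • tp • v = (0 : E) := by
            rw [smul_smul, smul_smul, ← add_smul]
            have hz : a * tm + b * tp = 0 := by
              rw [ha, hb]; field_simp; ring
            rw [hz, zero_smul]
          calc a • x + a • tm • v + (b • x + b • tp • v)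
              = (a • x + b • x) + (a • tm • v + b • tp • v) := by abel
            _ = x + 0 := by rw [h1, h2]
            _ = x := add_zero x
        rw [heq] at hcombo
        exact hcombo
      · exact hbd x hx hxint
    · -- empty interior: transport to the direction of the affine span
      intro x hx
      have hspan : affineSpan ℝ s ≠ ⊤ := by
        intro h
        rw [← hconv.interior_nonempty_iff_affineSpan_eq_top] at h
        exact hint h
      set V := (affineSpan ℝ s).direction with hV
      have hVne : (affineSpan ℝ s : Set E).Nonempty := ⟨x, subset_affineSpan ℝ s hx⟩
      have hVlt : V < ⊤ := by
        rcases lt_or_eq_of_le (le_top : V ≤ ⊤) with h | h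
        · exact h
        · exfalso
          apply hspan
          exact (AffineSubspace.direction_eq_top_iff_of_nonempty hVne).1 h
      have hVrank : Module.finrank ℝ V ≤ N := by
        have := Submodule.finrank_lt (K := ℝ) (V := E) hVlt.ne
        omega
      have htrans := transport_hull ih V hVrank x s
        (fun y hy => AffineSubspace.vsub_mem_direction (subset_affineSpan ℝ s hy)
          (subset_affineSpan ℝ s hx)) hcomp hconv
      exact htrans hx

lemma cubelike_step {n : ℕ} {B : Set (Fin n → ℝ)} (hconv : Convex ℝ B)
    (hcomp : IsCompact B) (hu : Unconditional B) (hcl : Cubelike B)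
    {x : Fin n → ℝ} (hx : x ∈ B) (j : Fin n) :
    ∃ w ∈ B, w j ≠ 0 ∧ ∀ i, i ≠ j → w i = x i := by
  classical
  have hmink : x ∈ convexHull ℝ (B.extremePoints ℝ) :=
    minkowski_aux (Module.finrank ℝ (Fin n → ℝ)) (Fin n → ℝ) le_rfl B hcomp hconv hx
  rw [convexHull_eq] at hmink
  obtain ⟨ι, t, wt, z, hw0, hw1, hzmem, hcm⟩ := hmink
  have hxrep : ∑ i ∈ t, wt i • z i = x := by
    rw [← hcm, Finset.centerMass_eq_of_sum_1 _ _ hw1]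
  set g : ι → (Fin n → ℝ) := fun i => fun k => if k = j then |z i j| else z i k with hg
  have hgB : ∀ i ∈ t, g i ∈ B := by
    intro i hi
    apply uncond_solid hconv hu (extremePoints_subset (hzmem i hi))
    intro k
    by_cases hkj : k = j
    · subst hkj; simp [hg]
    · simp [hg, hkj]
  have hsummem : ∑ i ∈ t, wt i • g i ∈ B := hconv.sum_mem hw0 hw1 hgB
  refine ⟨∑ i ∈ t, wt i • g i, hsummem, ?_, ?_⟩
  · -- j-th coordinate positive
    have hterm : ∀ i ∈ t, 0 ≤ wt i * |z i j| := fun i hi =>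
      mul_nonneg (hw0 i hi) (abs_nonneg _)
    have hcoord : (∑ i ∈ t, wt i • g i) j = ∑ i ∈ t, wt i * |z i j| := by
      rw [Finset.sum_apply]
      apply Finset.sum_congr rfl
      intro i hi
      simp [hg]
    rw [hcoord]
    -- some weight is positive
    have hex : ∃ i ∈ t, 0 < wt i := by
      by_contra hno
      push_neg at hno
      have : ∑ i ∈ t, wt i = 0 := Finset.sum_eq_zero (fun i hi =>
        le_antisymm (hno i hi) (hw0 i hi))
      rw [hw1] at this; norm_num at this
    obtain ⟨i₀, hi₀, hwi₀⟩ := hex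
    have hzpos : 0 < |z i₀ j| := abs_pos.2 (hcl (z i₀) (hzmem i₀ hi₀) j)
    have h1 : 0 < wt i₀ * |z i₀ j| := mul_pos hwi₀ hzpos
    have h2 := Finset.single_le_sum hterm hi₀
    intro h
    rw [h] at h2
    linarith
  · intro k hkj
    rw [Finset.sum_apply]
    have : ∀ i ∈ t, (wt i • g i) k = (wt i • z i) k := by
      intro i hi
      simp [hg, hkj]
    rw [Finset.sum_congr rfl this]
    have h2 : ∑ i ∈ t, (wt i • z i) k = (∑ i ∈ t, wt i • z i) k := by
      rw [Finset.sum_apply]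
    rw [h2, hxrep]

lemma cubelike_witness {n : ℕ} {B : Set (Fin n → ℝ)} (hconv : Convex ℝ B)
    (hcomp : IsCompact B) (hu : Unconditional B) (hcl : Cubelike B)
    {x : Fin n → ℝ} (hx : x ∈ B) :
    ∃ w ∈ B, (∀ i, w i ≠ 0) ∧ ∀ i, x i ≠ 0 → w i = x i := by
  classical
  suffices h : ∀ S : Finset (Fin n), ∀ x ∈ B, (∀ i, i ∉ S → x i ≠ 0) →
      ∃ w ∈ B, (∀ i, w i ≠ 0) ∧ ∀ i, x i ≠ 0 → w i = x i by
    exact h Finset.univ x hx (by simp)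
  intro S
  induction S using Finset.induction with
  | empty =>
    intro x hx h0
    exact ⟨x, hx, fun i => h0 i (by simp), fun i _ => rfl⟩
  | insert j S' hjS ih =>
    intro x hx h0
    by_cases hxj : x j = 0
    · obtain ⟨w', hw'B, hw'j, hw'i⟩ := cubelike_step hconv hcomp hu hcl hx j
      have hw'ne : ∀ i, i ∉ S' → w' i ≠ 0 := by
        intro i hi
        by_cases hij : i = j
        · subst hij; exact hw'j
        · rw [hw'i i hij]
          exact h0 i (by simp [hij, hi])
      obtain ⟨w, hwB, hwne, hwi⟩ := ih w' hw'B hw'ne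
      refine ⟨w, hwB, hwne, ?_⟩
      intro i hxi
      have hij : i ≠ j := fun h => hxi (h ▸ hxj)
      rw [hwi i (by rw [hw'i i hij]; exact hxi), hw'i i hij]
    · apply ih x hx
      intro i hi
      by_cases hij : i = j
      · subst hij; exact hxj
      · exact h0 i (by simp [hij, hi])

/-- For a 1-unconditional convex body `B`: any direction with the
same zero set as a boundary point `x` and opposite signs elsewhere illuminates
`x`; consequently `{-1,0,1}^n ∖ {0}` illuminates `B`, and if `B` is cubelike
then `{-1,1}^n` illuminates `B`, so `𝕀(B) ≤ 2^n`. -/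
theorem stmt5 (n : ℕ) (B : Set (Fin n → ℝ)) (hB : IsConvexBody B)
    (hu : Unconditional B) :
    (∀ x ∈ frontier B, ∀ d : Fin n → ℝ,
        (∀ i, d i = 0 ↔ x i = 0) → (∀ i, x i ≠ 0 → d i * x i < 0) →
        Illuminates B d x) ∧
      IlluminatesSet B {d | (∀ i, d i = 1 ∨ d i = 0 ∨ d i = -1) ∧ d ≠ 0} ∧
      (Cubelike B →
        IlluminatesSet B {d | ∀ i, d i = 1 ∨ d i = -1} ∧
          illumNumber B ≤ 2 ^ n) := by
  classical
  obtain ⟨hconv, hcomp, hint⟩ := hB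
  have h0 : (0 : Fin n → ℝ) ∈ interior B := zero_mem_interior hconv hu hint
  have hmemB : ∀ x ∈ frontier B, x ∈ B := by
    intro x hxf
    have := frontier_subset_closure hxf
    rwa [hcomp.isClosed.closure_eq] at this
  have hnotint : ∀ x ∈ frontier B, x ∉ interior B := fun x hxf => hxf.2
  have part1 : ∀ x ∈ frontier B, ∀ d : Fin n → ℝ,
      (∀ i, d i = 0 ↔ x i = 0) → (∀ i, x i ≠ 0 → d i * x i < 0) →
      Illuminates B d x := by
    intro x hxf d hzd hsign
    exact illum_key hconv hu h0 (hmemB x hxf)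
      (fun i hi => ⟨rfl, hsign i hi⟩)
      (fun i hi => Or.inl ((hzd i).mpr hi))
  refine ⟨part1, ?_, ?_⟩
  · -- {-1,0,1}^n \ {0}
    intro x hxf
    have hxB := hmemB x hxf
    have hxne : x ≠ 0 := fun h => hnotint x hxf (h ▸ h0)
    obtain ⟨j, hj⟩ := Function.ne_iff.1 hxne
    have hj' : x j ≠ 0 := by simpa using hj
    set d : Fin n → ℝ := fun i => if x i = 0 then 0 else if 0 < x i then -1 else 1 with hd
    have hdj : d j ≠ 0 := by
      simp only [hd, if_neg hj']
      split_ifs <;> norm_num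
    refine ⟨d, ⟨?_, ?_⟩, ?_⟩
    · intro i
      simp only [hd]
      split_ifs <;> simp
    · intro h
      exact hdj (by rw [h]; rfl)
    · apply part1 x hxf
      · intro i
        simp only [hd]
        split_ifs with h1 h2 <;> simp [h1] <;> norm_num
      · intro i hi
        simp only [hd, if_neg hi]
        rcases lt_trichotomy (x i) 0 with h | h | h
        · rw [if_neg (by linarith)]
          linarith
        · exact absurd h hi
        · rw [if_pos h]
          linarith
  · -- cubelike part
    intro hcl
    have hillum : IlluminatesSet B {d | ∀ i, d i = 1 ∨ d i = -1} := by
      intro x hxf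
      have hxB := hmemB x hxf
      obtain ⟨w, hwB, hwne, hwi⟩ := cubelike_witness hconv hcomp hu hcl hxB
      set d : Fin n → ℝ := fun i => if x i = 0 then 1 else if 0 < x i then -1 else 1 with hd
      refine ⟨d, ?_, ?_⟩
      · intro i
        simp only [hd]
        split_ifs <;> simp
      · apply illum_key hconv hu h0 hwB
        · intro i hi
          refine ⟨hwi i hi, ?_⟩
          simp only [hd, if_neg hi]
          rcases lt_trichotomy (x i) 0 with h | h | h
          · rw [if_neg (by linarith)]; linarith
          · exact absurd h hi
          · rw [if_pos h]; linarith
        · intro i hi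
          exact Or.inr (hwne i)
    refine ⟨hillum, ?_⟩
    rcases Nat.eq_zero_or_pos n with hn | hn
    · subst hn
      have hfr : frontier B = ∅ := by
        ext x
        simp only [Set.mem_empty_iff_false, iff_false]
        intro hxf
        have : x = 0 := funext fun i => i.elim0
        exact hnotint x hxf (this ▸ h0)
      have h00 : 0 ∈ {m | ∃ D : Finset (Fin 0 → ℝ), D.card = m ∧ (∀ d ∈ D, d ≠ 0) ∧
          IlluminatesSet B ↑D} := by
        refine ⟨∅, rfl, by simp, ?_⟩
        intro x hxf
        rw [hfr] at hxf
        exact absurd hxf (Set.notMem_empty x)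
      calc illumNumber B ≤ 0 := Nat.sInf_le h00
        _ ≤ 2 ^ 0 := by norm_num
    · set D : Finset (Fin n → ℝ) := Fintype.piFinset (fun _ : Fin n => ({1, -1} : Finset ℝ))
        with hD
      have hcard : D.card = 2 ^ n := by
        rw [hD, Fintype.card_piFinset]
        have h2 : ({1, -1} : Finset ℝ).card = 2 := Finset.card_pair (by norm_num)
        simp [h2]
      have hmm : 2 ^ n ∈ {m | ∃ D : Finset (Fin n → ℝ), D.card = m ∧ (∀ d ∈ D, d ≠ 0) ∧
          IlluminatesSet B ↑D} := by
        refine ⟨D, hcard, ?_, ?_⟩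
        · intro d hdD
          have hmem := (Fintype.mem_piFinset).1 (by rwa [hD] at hdD)
          intro h
          have hi := hmem ⟨0, hn⟩
          rw [h] at hi
          simp at hi
        · intro x hxf
          obtain ⟨d, hdmem, hdil⟩ := hillum x hxf
          refine ⟨d, ?_, hdil⟩
          rw [hD, Finset.mem_coe, Fintype.mem_piFinset]
          intro i
          rcases hdmem i with h | h <;> simp [h]
      exact Nat.sInf_le hmm
end

section
/- Let B ∈ 𝒰³ and suppose e_i + e_j ∉ B for every pair of distinct indices i, j ∈ {1,2,3}. Then there exist δ ∈ (0,1) and a permutation σ of the coordinates {1,2,3} such that the set obtained by applying σ to {±(1,δ,0), ±(−δ,1,0), ±(0,0,1)} illuminates B. In particular 𝕀(B) ≤ 6. -/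
open Set

namespace Stmt7

noncomputable section

def dot (ν w : Fin 3 → ℝ) : ℝ := ∑ i, ν i * w i

lemma dot3 (ν w : Fin 3 → ℝ) : dot ν w = ν 0 * w 0 + ν 1 * w 1 + ν 2 * w 2 := by
  simp [dot, Fin.sum_univ_three]

lemma dot_neg (ν w : Fin 3 → ℝ) : dot ν (-w) = -dot ν w := by
  simp only [dot3, Pi.neg_apply]; ring

lemma dot_add_smul (ν x d : Fin 3 → ℝ) (ε : ℝ) :
    dot ν (x + ε • d) = dot ν x + ε * dot ν d := by
  simp only [dot3, Pi.add_apply, Pi.smul_apply, smul_eq_mul]; ring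

lemma dot_stdB (ν : Fin 3 → ℝ) (i : Fin 3) : dot ν (stdB i) = ν i := by
  fin_cases i <;> simp [dot3, stdB, Pi.single_apply]

lemma dot_lit (ν : Fin 3 → ℝ) (a b c : ℝ) :
    dot ν ![a, b, c] = ν 0 * a + ν 1 * b + ν 2 * c := by
  simp [dot3]

structure GoodBody (A : Set (Fin 3 → ℝ)) : Prop where
  conv : Convex ℝ A
  comp : IsCompact A
  inte : (interior A).Nonempty
  unc : Unconditional A
  ei : ∀ i, stdB i ∈ frontier A
  pairs : ∀ i j : Fin 3, i ≠ j → stdB i + stdB j ∉ A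

variable {A : Set (Fin 3 → ℝ)}

lemma neg_mem (h : GoodBody A) {w : Fin 3 → ℝ} (hw : w ∈ A) : -w ∈ A := by
  have := h.unc w hw (fun _ => -1) (fun _ => Or.inr rfl)
  convert this using 1
  funext i; simp

lemma eiA (h : GoodBody A) (i : Fin 3) : stdB i ∈ A :=
  h.comp.isClosed.frontier_subset (h.ei i)

lemma update_mem (h : GoodBody A) {w : Fin 3 → ℝ} (hw : w ∈ A) (i : Fin 3) {t : ℝ}
    (ht : |t| ≤ |w i|) : Function.update w i t ∈ A := by
  rcases eq_or_ne (w i) 0 with h0 | h0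
  · have ht0 : t = 0 := by
      rw [h0] at ht; simpa using ht
    rw [ht0, ← h0, Function.update_eq_self]; exact hw
  · have hflipA : (fun j => (Function.update (fun _ => (1:ℝ)) i (-1)) j * w j) ∈ A :=
      h.unc w hw _ (fun j => by
        by_cases hj : j = i <;> simp [Function.update_apply, hj])
    set θ : ℝ := (t + w i) / (2 * w i) with hθ
    obtain ⟨ht1, ht2⟩ := abs_le.mp ht
    have hθ01 : 0 ≤ θ ∧ θ ≤ 1 := by
      rcases lt_or_gt_of_ne h0 with hneg | hpos
      · rw [abs_of_neg hneg] at ht1 ht2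
        constructor
        · rw [hθ, ← neg_div_neg_eq]
          apply div_nonneg <;> linarith
        · rw [hθ, ← neg_div_neg_eq, div_le_one (by linarith)]
          linarith
      · rw [abs_of_pos hpos] at ht1 ht2
        constructor
        · apply div_nonneg <;> linarith
        · rw [hθ, div_le_one (by linarith)]; linarith
    have key : Function.update w i t
        = θ • w + (1 - θ) • (fun j => (Function.update (fun _ => (1:ℝ)) i (-1)) j * w j) := by
      funext j
      by_cases hj : j = i
      · subst hj
        simp only [Function.update_self, Pi.add_apply, Pi.smul_apply, smul_eq_mul]
        rw [hθ]; field_simp; ring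
      · simp only [Function.update_of_ne hj, Pi.add_apply, Pi.smul_apply, smul_eq_mul,
          Function.update_of_ne hj]
        ring
    rw [key]
    exact h.conv hw hflipA hθ01.1 (by linarith [hθ01.2]) (by ring)

lemma box_mem (h : GoodBody A) {w : Fin 3 → ℝ} (hw : w ∈ A) (z : Fin 3 → ℝ)
    (hz : ∀ i, |z i| ≤ |w i|) : z ∈ A := by
  have h0 : Function.update w 0 (z 0) ∈ A := update_mem h hw 0 (hz 0)
  have h1 : Function.update (Function.update w 0 (z 0)) 1 (z 1) ∈ A := by
    apply update_mem h h0
    rw [Function.update_of_ne (by decide)]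
    exact hz 1
  have h2 : Function.update (Function.update (Function.update w 0 (z 0)) 1 (z 1)) 2 (z 2) ∈ A := by
    apply update_mem h h1
    rw [Function.update_of_ne (by decide), Function.update_of_ne (by decide)]
    exact hz 2
  have : z = Function.update (Function.update (Function.update w 0 (z 0)) 1 (z 1)) 2 (z 2) := by
    funext j
    fin_cases j <;> simp [Function.update_apply]
  rw [this]; exact h2


lemma stdB_apply (a b : Fin 3) : stdB a b = if b = a then 1 else 0 := by
  rw [stdB, Pi.single_apply]

lemma cube_sub (h : GoodBody A) :
    ∃ ρ : ℝ, 0 < ρ ∧ ∀ w : Fin 3 → ℝ, (∀ i, |w i| ≤ ρ) → w ∈ A := by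
  obtain ⟨z, hz⟩ := h.inte
  obtain ⟨ρ₀, hρ₀, hball⟩ := Metric.isOpen_iff.mp isOpen_interior z hz
  refine ⟨ρ₀ / 2, by positivity, fun w hw => ?_⟩
  set q : Fin 3 → ℝ := fun i => z i + (if 0 ≤ z i then 1 else -1) * |w i| with hq
  have hqball : q ∈ Metric.ball z ρ₀ := by
    rw [Metric.mem_ball, dist_pi_lt_iff hρ₀]
    intro i
    have hqi : q i - z i = (if 0 ≤ z i then 1 else -1) * |w i| := by simp [hq]
    rw [Real.dist_eq, hqi, abs_mul]
    have h1 : |(if 0 ≤ z i then (1:ℝ) else -1)| = 1 := by split <;> norm_num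
    rw [h1, one_mul, abs_abs]
    calc |w i| ≤ ρ₀ / 2 := hw i
    _ < ρ₀ := by linarith
  have hqA : q ∈ A := interior_subset (hball hqball)
  apply box_mem h hqA w
  intro i
  have hwnn := abs_nonneg (w i)
  rcases le_or_gt 0 (z i) with hzi | hzi
  · have hqi : q i = z i + |w i| := by simp [hq, hzi]
    have h0' : 0 ≤ z i + |w i| := by linarith
    rw [hqi, abs_of_nonneg h0']
    linarith
  · have hqi : q i = z i - |w i| := by
      simp [hq, not_le.mpr hzi]; ring
    have h0' : z i - |w i| ≤ 0 := by linarith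
    rw [hqi, abs_of_nonpos h0']
    linarith

lemma zero_int (h : GoodBody A) : (0 : Fin 3 → ℝ) ∈ interior A := by
  obtain ⟨ρ, hρ, hcube⟩ := cube_sub h
  have hsub : Metric.ball (0 : Fin 3 → ℝ) ρ ⊆ A := by
    intro w hw
    rw [Metric.mem_ball] at hw
    apply hcube
    intro i
    have h1 : dist (w i) 0 ≤ dist w 0 := dist_le_pi_dist w 0 i
    rw [Real.dist_eq, sub_zero] at h1
    exact le_of_lt (lt_of_le_of_lt h1 hw)
  exact interior_maximal hsub Metric.isOpen_ball (Metric.mem_ball_self hρ)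

lemma cube_bound (h : GoodBody A) {w : Fin 3 → ℝ} (hw : w ∈ A) (i : Fin 3) : |w i| ≤ 1 := by
  by_contra hgt
  push_neg at hgt
  set c := |w i| with hc
  have hcpos : (0:ℝ) < c := lt_trans one_pos hgt
  have hzA : (fun j => if j = i then c else 0) ∈ A := by
    apply box_mem h hw
    intro j
    by_cases hj : j = i
    · subst hj; rw [if_pos rfl, abs_of_nonneg hcpos.le]
    · rw [if_neg hj, abs_zero]; exact abs_nonneg _
  have hiint : stdB i ∈ interior A := by
    have h1c : 1 / c < 1 := by rw [div_lt_one hcpos]; exact hgt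
    have hcombo := h.conv.combo_interior_self_mem_interior (zero_int h) hzA
      (a := 1 - 1/c) (b := 1/c) (by linarith) (by positivity) (by ring)
    convert hcombo using 1
    funext j
    simp only [Pi.add_apply, Pi.smul_apply, Pi.zero_apply, smul_eq_mul, mul_zero, zero_add]
    by_cases hj : j = i
    · subst hj
      rw [stdB_apply, if_pos rfl, if_pos rfl]
      field_simp
    · rw [stdB_apply, if_neg hj, if_neg hj, mul_zero]
  have hfr := h.ei i
  rw [h.comp.isClosed.frontier_eq] at hfr
  exact hfr.2 hiint

lemma pair_bound (h : GoodBody A) :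
    ∃ β : ℝ, 1/2 ≤ β ∧ β < 1 ∧
      ∀ w ∈ A, ∀ i j : Fin 3, i ≠ j → β < |w i| → |w j| ≤ β := by
  have hsep : ∀ i j : Fin 3, ∃ ε : ℝ, 0 < ε ∧
      (i ≠ j → Metric.ball (stdB i + stdB j) ε ⊆ Aᶜ) := by
    intro i j
    by_cases hij : i = j
    · exact ⟨1, one_pos, fun h' => absurd hij h'⟩
    · have hnm : stdB i + stdB j ∈ Aᶜ := h.pairs i j hij
      obtain ⟨ε, hε, hball⟩ := Metric.isOpen_iff.mp h.comp.isClosed.isOpen_compl _ hnm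
      exact ⟨ε, hε, fun _ => hball⟩
  choose ε hεpos hεball using hsep
  set η : ℝ := min (1/2) (min (min (ε 0 1) (ε 0 2)) (min (min (ε 1 0) (ε 1 2)) (min (ε 2 0) (ε 2 1)))) with hη
  have hηpos : 0 < η := by
    apply lt_min (by norm_num)
    exact lt_min (lt_min (hεpos 0 1) (hεpos 0 2))
      (lt_min (lt_min (hεpos 1 0) (hεpos 1 2)) (lt_min (hεpos 2 0) (hεpos 2 1)))
  have e01 : η ≤ ε 0 1 := le_trans (min_le_right _ _) (le_trans (min_le_left _ _) (min_le_left _ _))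
  have e02 : η ≤ ε 0 2 := le_trans (min_le_right _ _) (le_trans (min_le_left _ _) (min_le_right _ _))
  have e10 : η ≤ ε 1 0 := le_trans (min_le_right _ _) (le_trans (min_le_right _ _) (le_trans (min_le_left _ _) (min_le_left _ _)))
  have e12 : η ≤ ε 1 2 := le_trans (min_le_right _ _) (le_trans (min_le_right _ _) (le_trans (min_le_left _ _) (min_le_right _ _)))
  have e20 : η ≤ ε 2 0 := le_trans (min_le_right _ _) (le_trans (min_le_right _ _) (le_trans (min_le_right _ _) (min_le_left _ _)))
  have e21 : η ≤ ε 2 1 := le_trans (min_le_right _ _) (le_trans (min_le_right _ _) (le_trans (min_le_right _ _) (min_le_right _ _)))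
  have hηle : ∀ i j : Fin 3, i ≠ j → η ≤ ε i j := by
    intro i j hij
    fin_cases i <;> fin_cases j <;>
      first
        | exact absurd rfl hij
        | exact e01 | exact e02 | exact e10 | exact e12 | exact e20 | exact e21
  have hη12 : η ≤ 1/2 := min_le_left _ _
  clear_value η
  refine ⟨1 - η, by linarith, by linarith, ?_⟩
  intro w hw i j hij hbi
  by_contra hbj
  push_neg at hbj
  set c : ℝ := min |w i| |w j| with hc
  have hcβ : 1 - η < c := lt_min hbi hbj
  have hc1 : c ≤ 1 := le_trans (min_le_left _ _) (cube_bound h hw i)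
  have hcpos : 0 < c := by linarith
  set z : Fin 3 → ℝ := fun k => if k = i then c else if k = j then c else 0 with hzdef
  have hzA : z ∈ A := by
    apply box_mem h hw
    intro k
    by_cases hki : k = i
    · subst hki
      show |if k = k then c else if k = j then c else 0| ≤ |w k|
      rw [if_pos rfl, abs_of_nonneg hcpos.le]
      exact min_le_left _ _
    · by_cases hkj : k = j
      · subst hkj
        show |if k = i then c else if k = k then c else 0| ≤ |w k|
        rw [if_neg hki, if_pos rfl, abs_of_nonneg hcpos.le]
        exact min_le_right _ _
      · show |if k = i then c else if k = j then c else 0| ≤ |w k|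
        rw [if_neg hki, if_neg hkj, abs_zero]
        exact abs_nonneg _
  have hzball : z ∈ Metric.ball (stdB i + stdB j) (ε i j) := by
    rw [Metric.mem_ball, dist_pi_lt_iff (hεpos i j)]
    intro k
    have hεik := hηle i j hij
    by_cases hki : k = i
    · subst hki
      have h1 : (stdB k + stdB j) k = 1 := by
        rw [Pi.add_apply, stdB_apply, stdB_apply, if_pos rfl, if_neg hij]; norm_num
      have h2 : z k = c := by show (if k = k then c else _) = c; rw [if_pos rfl]
      rw [h1, h2, Real.dist_eq, abs_of_nonpos (by linarith)]
      linarith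
    · by_cases hkj : k = j
      · subst hkj
        have h1 : (stdB i + stdB k) k = 1 := by
          rw [Pi.add_apply, stdB_apply, stdB_apply, if_neg hki, if_pos rfl]; norm_num
        have h2 : z k = c := by
          show (if k = i then c else if k = k then c else 0) = c
          rw [if_neg hki, if_pos rfl]
        rw [h1, h2, Real.dist_eq, abs_of_nonpos (by linarith)]
        linarith
      · have h1 : (stdB i + stdB j) k = 0 := by
          rw [Pi.add_apply, stdB_apply, stdB_apply, if_neg hki, if_neg hkj]; norm_num
        have h2 : z k = 0 := by
          show (if k = i then c else if k = j then c else 0) = 0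
          rw [if_neg hki, if_neg hkj]
        rw [h1, h2]
        simpa using lt_of_lt_of_le hηpos hεik
  exact (hεball i j hij hzball) hzA


lemma stdB_eq (i : Fin 3) : (fun j => if i = j then (1:ℝ) else 0) = stdB i := by
  funext j
  rw [stdB, Pi.single_apply]
  by_cases hj : j = i
  · rw [if_pos hj, if_pos hj.symm]
  · rw [if_neg hj, if_neg (fun e => hj e.symm)]

lemma illum_criterion (h : GoodBody A) {x d : Fin 3 → ℝ} (hxA : x ∈ A)
    (hcrit : ∀ ν : Fin 3 → ℝ, (∀ y ∈ A, dot ν y ≤ 1) → dot ν x = 1 → dot ν d < 0) :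
    Illuminates A d x := by
  by_contra hno
  rw [Illuminates] at hno
  push_neg at hno
  obtain ⟨ρ, hρ, hcube⟩ := cube_sub h
  have h0int : (0 : Fin 3 → ℝ) ∈ interior A := zero_int h
  set p : ℕ → Fin 3 → ℝ := fun n => x + (1/(n+1) : ℝ) • d with hp
  have hsep : ∀ n : ℕ, ∃ f : (Fin 3 → ℝ) →L[ℝ] ℝ, ∀ a ∈ interior A, f a < f (p n) := by
    intro n
    exact geometric_hahn_banach_open_point (h.conv.interior) isOpen_interior
      (hno _ (by positivity))
  choose f hf using hsep
  have hcpos : ∀ n, 0 < f n (p n) := by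
    intro n
    have := hf n 0 h0int
    simpa using this
  have hfA : ∀ n, ∀ y ∈ A, f n y ≤ f n (p n) := by
    intro n y hy
    by_contra hgt
    push_neg at hgt
    set c := f n (p n) with hcdef
    set T := f n y with hTdef
    have hT : 0 < T := lt_trans (hcpos n) hgt
    set t : ℝ := (T - c) / (2 * T) with ht
    have ht0 : 0 < t := by
      apply div_pos (by linarith) (by linarith)
    have ht1 : t ≤ 1/2 := by
      rw [ht, div_le_iff₀ (by linarith)]
      nlinarith [hcpos n]
    have hcombo : t • (0 : Fin 3 → ℝ) + (1 - t) • y ∈ interior A :=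
      h.conv.combo_interior_self_mem_interior h0int hy ht0 (by linarith) (by ring)
    have hlt := hf n _ hcombo
    rw [map_add, map_smul, map_smul, map_zero, smul_zero, zero_add, smul_eq_mul] at hlt
    -- hlt : (1 - t) * T < c
    have hexp : (1 - t) * T = (T + c) / 2 := by
      rw [ht]; field_simp; ring
    rw [hexp] at hlt
    linarith
  set v : ℕ → Fin 3 → ℝ := fun n i => f n (stdB i) / f n (p n) with hv
  have hvdot : ∀ n (w : Fin 3 → ℝ), dot (v n) w = f n w / f n (p n) := by
    intro n w
    have hlin : f n w = ∑ i, w i * f n (stdB i) := by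
      have h1 := LinearMap.pi_apply_eq_sum_univ ((f n).toLinearMap) w
      simp only [ContinuousLinearMap.coe_coe] at h1
      rw [h1]
      apply Finset.sum_congr rfl
      intro i _
      rw [stdB_eq i, smul_eq_mul]
    rw [dot, hlin, Finset.sum_div]
    apply Finset.sum_congr rfl
    intro i _
    rw [hv]
    ring
  have hv1 : ∀ n, dot (v n) (p n) = 1 := fun n => by
    rw [hvdot, div_self (hcpos n).ne']
  have hvA : ∀ n, ∀ y ∈ A, dot (v n) y ≤ 1 := fun n y hy => by
    rw [hvdot, div_le_one (hcpos n)]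
    exact hfA n y hy
  have hvbound : ∀ n i, |v n i| ≤ 1/ρ := by
    intro n i
    have hplusA : (fun j => if j = i then ρ else 0) ∈ A := by
      apply hcube
      intro j
      by_cases hj : j = i
      · rw [if_pos hj, abs_of_nonneg hρ.le]
      · rw [if_neg hj, abs_zero]; exact hρ.le
    have hminusA : (fun j => if j = i then -ρ else 0) ∈ A := by
      apply hcube
      intro j
      by_cases hj : j = i
      · rw [if_pos hj, abs_neg, abs_of_nonneg hρ.le]
      · rw [if_neg hj, abs_zero]; exact hρ.le
    have e1 : dot (v n) (fun j => if j = i then ρ else 0) = ρ * v n i := by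
      fin_cases i <;> simp [dot3] <;> ring
    have e2 : dot (v n) (fun j => if j = i then -ρ else 0) = -(ρ * v n i) := by
      fin_cases i <;> simp [dot3] <;> ring
    have h1 := hvA n _ hplusA
    have h2 := hvA n _ hminusA
    rw [e1] at h1
    rw [e2] at h2
    rw [abs_le]
    constructor
    · rw [neg_le]
      rw [le_div_iff₀ hρ] at *
      nlinarith
    · rw [le_div_iff₀ hρ]
      nlinarith
  have hvmem : ∀ n, v n ∈ Metric.closedBall (0 : Fin 3 → ℝ) (1/ρ) := by
    intro n
    rw [Metric.mem_closedBall, dist_pi_le_iff (by positivity)]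
    intro i
    rw [Real.dist_eq, Pi.zero_apply, sub_zero]
    exact hvbound n i
  obtain ⟨ν, _hνmem, φ, hφ, htend⟩ :=
    (isCompact_closedBall (0 : Fin 3 → ℝ) (1/ρ)).tendsto_subseq hvmem
  have hti : ∀ i : Fin 3, Filter.Tendsto (fun n => v (φ n) i) Filter.atTop (nhds (ν i)) := by
    intro i
    exact ((continuous_apply i).tendsto ν).comp htend
  have hdt : ∀ w : Fin 3 → ℝ,
      Filter.Tendsto (fun n => dot (v (φ n)) w) Filter.atTop (nhds (dot ν w)) := by
    intro w
    simp only [dot]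
    apply tendsto_finset_sum
    intro i _
    exact (hti i).mul tendsto_const_nhds
  have hbν : ∀ y ∈ A, dot ν y ≤ 1 := fun y hy =>
    le_of_tendsto (hdt y) (Filter.Eventually.of_forall fun n => hvA (φ n) y hy)
  have hvd_nonneg : ∀ n, 0 ≤ dot (v n) d := by
    intro n
    have hpx : dot (v n) (p n) = dot (v n) x + (1/(n+1) : ℝ) * dot (v n) d := by
      rw [hp]; exact dot_add_smul _ _ _ _
    have hx_le : dot (v n) x ≤ 1 := hvA n x hxA
    have h1 : dot (v n) x + (1/(n+1) : ℝ) * dot (v n) d = 1 := by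
      rw [← hpx, hv1]
    have hpos : (0:ℝ) < 1/(n+1) := by positivity
    nlinarith
  have hdd : 0 ≤ dot ν d :=
    ge_of_tendsto (hdt d) (Filter.Eventually.of_forall fun n => hvd_nonneg (φ n))
  set M : ℝ := (1/ρ) * (|d 0| + |d 1| + |d 2|) with hM
  have hM0 : 0 ≤ M := by positivity
  have hMb : ∀ n, |dot (v n) x - 1| ≤ (1/(n+1) : ℝ) * M := by
    intro n
    have hpx : dot (v n) (p n) = dot (v n) x + (1/(n+1) : ℝ) * dot (v n) d := by
      rw [hp]; exact dot_add_smul _ _ _ _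
    have h1 : dot (v n) x - 1 = -((1/(n+1) : ℝ) * dot (v n) d) := by
      have := hv1 n
      rw [hpx] at this
      linarith
    rw [h1, abs_neg, abs_mul]
    have hd1 : |dot (v n) d| ≤ M := by
      rw [dot3, hM]
      have b0 := hvbound n 0
      have b1 := hvbound n 1
      have b2 := hvbound n 2
      have t0 : |v n 0 * d 0| ≤ (1/ρ) * |d 0| := by
        rw [abs_mul]
        exact mul_le_mul_of_nonneg_right b0 (abs_nonneg _)
      have t1 : |v n 1 * d 1| ≤ (1/ρ) * |d 1| := by
        rw [abs_mul]
        exact mul_le_mul_of_nonneg_right b1 (abs_nonneg _)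
      have t2 : |v n 2 * d 2| ≤ (1/ρ) * |d 2| := by
        rw [abs_mul]
        exact mul_le_mul_of_nonneg_right b2 (abs_nonneg _)
      calc |v n 0 * d 0 + v n 1 * d 1 + v n 2 * d 2|
          ≤ |v n 0 * d 0 + v n 1 * d 1| + |v n 2 * d 2| := abs_add_le _ _
        _ ≤ |v n 0 * d 0| + |v n 1 * d 1| + |v n 2 * d 2| := by
            linarith [abs_add_le (v n 0 * d 0) (v n 1 * d 1)]
        _ ≤ (1/ρ) * (|d 0| + |d 1| + |d 2|) := by linarith
    have habs : |(1/(n+1) : ℝ)| = (1/(n+1) : ℝ) := abs_of_pos (by positivity)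
    rw [habs]
    exact mul_le_mul_of_nonneg_left hd1 (by positivity)
  have hxlim : Filter.Tendsto (fun n => dot (v (φ n)) x) Filter.atTop (nhds 1) := by
    rw [tendsto_iff_dist_tendsto_zero]
    have hb : ∀ n, dist (dot (v (φ n)) x) 1 ≤ M * (1/(φ n + 1) : ℝ) := by
      intro n
      rw [Real.dist_eq]
      calc |dot (v (φ n)) x - 1| ≤ (1/(φ n + 1) : ℝ) * M := hMb (φ n)
        _ = M * (1/(φ n + 1) : ℝ) := by ring
    have hz : Filter.Tendsto (fun n => M * (1/(φ n + 1) : ℝ)) Filter.atTop (nhds 0) := by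
      have h1 : Filter.Tendsto (fun n : ℕ => (1/(n + 1) : ℝ)) Filter.atTop (nhds 0) :=
        tendsto_one_div_add_atTop_nhds_zero_nat
      have h2 : Filter.Tendsto (fun n => (1/(φ n + 1) : ℝ)) Filter.atTop (nhds 0) :=
        h1.comp hφ.tendsto_atTop
      simpa using h2.const_mul M
    exact squeeze_zero (fun n => dist_nonneg) hb hz
  have hx1 : dot ν x = 1 := tendsto_nhds_unique (hdt x) hxlim
  have := hcrit ν hbν hx1
  linarith


lemma nu_le_one (h : GoodBody A) {ν : Fin 3 → ℝ} (hb : ∀ y ∈ A, dot ν y ≤ 1) (i : Fin 3) :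
    ν i ≤ 1 := by
  have h1 := hb _ (eiA h i)
  rwa [dot_stdB] at h1

lemma nu_abs_le_one (h : GoodBody A) {ν : Fin 3 → ℝ} (hb : ∀ y ∈ A, dot ν y ≤ 1) (i : Fin 3) :
    |ν i| ≤ 1 := by
  have h1 := hb _ (eiA h i)
  have h2 := hb _ (neg_mem h (eiA h i))
  rw [dot_stdB] at h1
  rw [dot_neg, dot_stdB] at h2
  rw [abs_le]
  constructor <;> linarith

lemma prod_nonneg_of (h : GoodBody A) {x ν : Fin 3 → ℝ} (hxA : x ∈ A)
    (hb : ∀ y ∈ A, dot ν y ≤ 1) (hx1 : dot ν x = 1) (i : Fin 3) : 0 ≤ ν i * x i := by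
  have hmem : (fun j => (Function.update (fun _ => (1:ℝ)) i (-1)) j * x j) ∈ A :=
    h.unc x hxA _ (fun j => by
      by_cases hj : j = i <;> simp [Function.update_apply, hj])
  have hle := hb _ hmem
  have he : dot ν (fun j => (Function.update (fun _ => (1:ℝ)) i (-1)) j * x j)
      = dot ν x - 2*(ν i * x i) := by
    fin_cases i <;>
      simp [dot3, Function.update_apply] <;> ring
  rw [he, hx1] at hle
  linarith

def badSlot (A : Set (Fin 3 → ℝ)) (k : Fin 3) : Prop :=
  ∃ X ν : Fin 3 → ℝ, X ∈ A ∧ (∀ i, 0 ≤ X i) ∧ X k = 1 ∧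
    (∀ y ∈ A, dot ν y ≤ 1) ∧ dot ν X = 1 ∧ (∀ i, 0 ≤ ν i) ∧ ν k = 0

lemma pair_one (h : GoodBody A) {W : Fin 3 → ℝ} (hW : W ∈ A) (hWpos : ∀ i, 0 ≤ W i)
    {a b : Fin 3} (hab : a ≠ b) (ha : W a = 1) (hb : W b = 1) : False := by
  apply h.pairs a b hab
  apply box_mem h hW
  intro i
  rw [Pi.add_apply, stdB_apply, stdB_apply]
  by_cases hia : i = a
  · subst hia
    rw [if_pos rfl, if_neg hab, abs_of_nonneg (hWpos i), ha]
    norm_num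
  · by_cases hib : i = b
    · subst hib
      rw [if_neg hia, if_pos rfl, abs_of_nonneg (hWpos i), hb]
      norm_num
    · rw [if_neg hia, if_neg hib, abs_of_nonneg (hWpos i)]
      norm_num
      exact hWpos i

lemma sum_three_distinct (k l m : Fin 3) (h1 : k ≠ l) (h2 : m ≠ k) (h3 : m ≠ l)
    (f : Fin 3 → ℝ) : ∑ i, f i = f k + f l + f m := by
  fin_cases k <;> fin_cases l <;> fin_cases m <;>
    simp_all [Fin.sum_univ_three] <;> ring

lemma bad_unique (h : GoodBody A) {k l : Fin 3} (hkl : k ≠ l)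
    (hk : badSlot A k) (hl : badSlot A l) : False := by
  obtain ⟨m, hmk, hml⟩ : ∃ m : Fin 3, m ≠ k ∧ m ≠ l := by
    have : ∀ k l : Fin 3, k ≠ l → ∃ m : Fin 3, m ≠ k ∧ m ≠ l := by decide
    exact this k l hkl
  obtain ⟨X, ν, hXA, hXpos, hXk, hbν, hνX, hνpos, hνk⟩ := hk
  obtain ⟨Y, μ, hYA, hYpos, hYl, hbμ, hμY, hμpos, hμl⟩ := hl
  have hX1 : ∀ i, X i ≤ 1 := fun i => le_trans (le_abs_self _) (cube_bound h hXA i)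
  have hY1 : ∀ i, Y i ≤ 1 := fun i => le_trans (le_abs_self _) (cube_bound h hYA i)
  have hν1 : ∀ i, ν i ≤ 1 := fun i => by
    have := hbν _ (eiA h i); rwa [dot_stdB] at this
  have hμ1 : ∀ i, μ i ≤ 1 := fun i => by
    have := hbμ _ (eiA h i); rwa [dot_stdB] at this
  have hXsum : ν l * X l + ν m * X m = 1 := by
    have e := hνX
    rw [dot, sum_three_distinct k l m hkl hmk hml (fun i => ν i * X i), hνk] at e
    linarith
  have hYsum : μ k * Y k + μ m * Y m = 1 := by
    have e := hμY
    rw [dot, sum_three_distinct l k m (Ne.symm hkl) hml hmk (fun i => μ i * Y i), hμl] at e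
    linarith
  have hXl1 : X l < 1 := by
    rcases lt_or_eq_of_le (hX1 l) with h' | h'
    · exact h'
    · exact absurd (pair_one h hXA hXpos hkl hXk h') id
  have hXm1 : X m < 1 := by
    rcases lt_or_eq_of_le (hX1 m) with h' | h'
    · exact h'
    · exact absurd (pair_one h hXA hXpos (Ne.symm hmk) hXk h') id
  have hYk1 : Y k < 1 := by
    rcases lt_or_eq_of_le (hY1 k) with h' | h'
    · exact h'
    · exact absurd (pair_one h hYA hYpos (Ne.symm hkl) hYl h') id
  have hYm1 : Y m < 1 := by
    rcases lt_or_eq_of_le (hY1 m) with h' | h'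
    · exact h'
    · exact absurd (pair_one h hYA hYpos (Ne.symm hml) hYl h') id
  have hνl : 0 < ν l := by
    rcases (hνpos l).lt_or_eq with h' | h'
    · exact h'
    · exfalso
      rw [← h', zero_mul, zero_add] at hXsum
      nlinarith [hν1 m, hXpos m, hνpos m, hXm1]
  have hμk : 0 < μ k := by
    rcases (hμpos k).lt_or_eq with h' | h'
    · exact h'
    · exfalso
      rw [← h', zero_mul, zero_add] at hYsum
      nlinarith [hμ1 m, hYpos m, hμpos m, hYm1]
  have hνY : ν l * Y l + ν m * Y m ≤ 1 := by
    have e := hbν Y hYA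
    rw [dot, sum_three_distinct k l m hkl hmk hml (fun i => ν i * Y i), hνk] at e
    linarith
  have hμX : μ k * X k + μ m * X m ≤ 1 := by
    have e := hbμ X hXA
    rw [dot, sum_three_distinct l k m (Ne.symm hkl) hml hmk (fun i => μ i * X i), hμl] at e
    linarith
  rw [hYl] at hνY
  rw [hXk] at hμX
  -- ν l * (1 - X l) ≤ ν m * (X m - Y m), LHS > 0
  have c1 : 0 < ν m * (X m - Y m) := by nlinarith
  have hXY : Y m < X m := by
    by_contra hcon
    push_neg at hcon
    nlinarith [hνpos m]
  have c2 : 0 < μ m * (Y m - X m) := by nlinarith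
  nlinarith [hμpos m]

lemma dot_litL (w : Fin 3 → ℝ) (a b c : ℝ) :
    dot ![a, b, c] w = a * w 0 + b * w 1 + c * w 2 := by
  rw [dot3]
  simp [Matrix.cons_val]

lemma main_illum (h : GoodBody A) (hgood : ¬ badSlot A 2) :
    ∃ δ : ℝ, 0 < δ ∧ δ < 1 ∧ IlluminatesSet A
      ({![1, δ, 0], -![1, δ, 0], ![-δ, 1, 0], -![-δ, 1, 0],
        ![0, 0, 1], -![0, 0, 1]} : Set (Fin 3 → ℝ)) := by
  obtain ⟨β, hβhalf, hβ1, hβpair⟩ := pair_bound h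
  set δ : ℝ := (1 - β)/2 with hδdef
  have hδ0 : 0 < δ := by rw [hδdef]; linarith
  have hδ1 : δ < 1 := by rw [hδdef]; linarith
  have h2δ : 2 * δ = 1 - β := by rw [hδdef]; ring
  refine ⟨δ, hδ0, hδ1, ?_⟩
  intro x hxf
  have hxA : x ∈ A := h.comp.isClosed.frontier_subset hxf
  have hxabs : ∀ i, |x i| ≤ 1 := fun i => cube_bound h hxA i
  -- set membership facts
  set S : Set (Fin 3 → ℝ) := {![1, δ, 0], -![1, δ, 0], ![-δ, 1, 0], -![-δ, 1, 0],
        ![0, 0, 1], -![0, 0, 1]} with hS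
  have m1 : ![1, δ, 0] ∈ S := Set.mem_insert _ _
  have m2 : -![1, δ, 0] ∈ S := by right; exact Set.mem_insert _ _
  have m3 : ![-δ, 1, 0] ∈ S := by right; right; exact Set.mem_insert _ _
  have m4 : -![-δ, 1, 0] ∈ S := by right; right; right; exact Set.mem_insert _ _
  have m5 : ![0, 0, 1] ∈ S := by right; right; right; right; exact Set.mem_insert _ _
  have m6 : -![0, 0, 1] ∈ S := by right; right; right; right; right; rfl
  have use : ∀ d ∈ S, (∀ ν : Fin 3 → ℝ, (∀ y ∈ A, dot ν y ≤ 1) → dot ν x = 1 →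
      dot ν d < 0) → ∃ d' ∈ S, Illuminates A d' x :=
    fun d hd hc => ⟨d, hd, illum_criterion h hxA hc⟩
  -- vertical branch helper
  have branchV : (∀ ν : Fin 3 → ℝ, (∀ y ∈ A, dot ν y ≤ 1) → dot ν x = 1 →
      0 < ν 2 * x 2) → x 2 ≠ 0 → ∃ d' ∈ S, Illuminates A d' x := by
    intro hkey hne
    rcases lt_or_gt_of_ne hne with hneg | hpos
    · apply use ![0,0,1] m5
      intro ν hb hx1
      have hk := hkey ν hb hx1
      rw [dot_lit]
      have hν2 : ν 2 < 0 := by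
        rcases lt_trichotomy (ν 2) 0 with h' | h' | h'
        · exact h'
        · rw [h'] at hk; simp at hk
        · nlinarith
      nlinarith
    · apply use (-![0,0,1]) m6
      intro ν hb hx1
      have hk := hkey ν hb hx1
      rw [dot_neg, dot_lit]
      have hν2 : 0 < ν 2 := by
        rcases lt_trichotomy (ν 2) 0 with h' | h' | h'
        · nlinarith
        · rw [h'] at hk; simp at hk
        · exact h'
      nlinarith
  by_cases hx2one : |x 2| = 1
  · -- |x 2| = 1 : vertical via badSlot-freeness
    apply branchV _ (by intro h0; rw [h0] at hx2one; norm_num at hx2one)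
    intro ν hb hx1
    by_contra hle
    push_neg at hle
    apply hgood
    -- construct bad slot witness
    have hXA : (fun i => |x i|) ∈ A := box_mem h hxA _ (fun i => by rw [abs_abs])
    have hsup : ∀ y ∈ A, dot ![|ν 0|, |ν 1|, 0] y ≤ 1 := by
      intro y hy
      have hwA : (fun i => if i = 2 then 0 else if 0 ≤ ν i then |y i| else -(|y i|)) ∈ A := by
        apply box_mem h hy
        intro i
        by_cases hi : i = 2
        · rw [if_pos hi, abs_zero]; exact abs_nonneg _
        · rw [if_neg hi]
          by_cases hνi : 0 ≤ ν i
          · rw [if_pos hνi, abs_abs]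
          · rw [if_neg hνi, abs_neg, abs_abs]
      have hdw := hb _ hwA
      have e : dot ν (fun i => if i = 2 then 0 else if 0 ≤ ν i then |y i| else -(|y i|))
          = |ν 0| * |y 0| + |ν 1| * |y 1| := by
        have t : ∀ i : Fin 3, i ≠ 2 → ν i * (if i = 2 then (0:ℝ) else if 0 ≤ ν i then |y i| else -(|y i|))
            = |ν i| * |y i| := by
          intro i hi
          rw [if_neg hi]
          by_cases hνi : 0 ≤ ν i
          · rw [if_pos hνi, abs_of_nonneg hνi]
          · rw [if_neg hνi, abs_of_neg (lt_of_not_ge hνi)]; ring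
        rw [dot3, t 0 (by decide), t 1 (by decide), if_pos rfl, mul_zero]
        ring
      rw [e] at hdw
      have e2 : dot ![|ν 0|, |ν 1|, 0] y = |ν 0| * y 0 + |ν 1| * y 1 := by
        rw [dot_litL]; ring
      rw [e2]
      have t0 : |ν 0| * y 0 ≤ |ν 0| * |y 0| :=
        mul_le_mul_of_nonneg_left (le_abs_self _) (abs_nonneg _)
      have t1 : |ν 1| * y 1 ≤ |ν 1| * |y 1| :=
        mul_le_mul_of_nonneg_left (le_abs_self _) (abs_nonneg _)
      linarith
    have hge : (1:ℝ) ≤ dot ![|ν 0|, |ν 1|, 0] (fun i => |x i|) := by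
      have e2 : dot ![|ν 0|, |ν 1|, 0] (fun i => |x i|) = |ν 0| * |x 0| + |ν 1| * |x 1| := by
        rw [dot_litL]; ring
      have t0 : ν 0 * x 0 ≤ |ν 0| * |x 0| := by
        rw [← abs_mul]; exact le_abs_self _
      have t1 : ν 1 * x 1 ≤ |ν 1| * |x 1| := by
        rw [← abs_mul]; exact le_abs_self _
      have hx1' := hx1
      rw [dot3] at hx1'
      rw [e2]
      nlinarith
    refine ⟨fun i => |x i|, ![|ν 0|, |ν 1|, 0], hXA, fun i => abs_nonneg _, hx2one,
      hsup, le_antisymm (hsup _ hXA) hge, ?_, ?_⟩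
    · intro i
      fin_cases i <;> simp [abs_nonneg]
    · simp [Matrix.cons_val]
  · -- |x 2| < 1
    have hx2lt : |x 2| < 1 := lt_of_le_of_ne (hxabs 2) hx2one
    by_cases h0 : x 0 = 0
    · by_cases h2b : |x 2| ≤ β
      · -- P2 family: key fact ν 1 * x 1 ≥ 2δ
        have key : ∀ ν : Fin 3 → ℝ, (∀ y ∈ A, dot ν y ≤ 1) → dot ν x = 1 →
            2 * δ ≤ ν 1 * x 1 := by
          intro ν hb hx1
          rw [dot3, h0, mul_zero] at hx1
          have hb2 : ν 2 * x 2 ≤ β := by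
            calc ν 2 * x 2 ≤ |ν 2 * x 2| := le_abs_self _
            _ = |ν 2| * |x 2| := abs_mul _ _
            _ ≤ 1 * β := mul_le_mul (nu_abs_le_one h hb 2) h2b (abs_nonneg _) zero_le_one
            _ = β := one_mul β
          linarith
        rcases le_or_gt 0 (x 1) with hx1sgn | hx1sgn
        · apply use (-![-δ, 1, 0]) m4
          intro ν hb hx1
          have hk := key ν hb hx1
          have hν1 : 2 * δ ≤ ν 1 := by
            have hν1nn : 0 ≤ ν 1 := by nlinarith
            nlinarith [hxabs 1, abs_le.mp (hxabs 1)]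
          have hν0 := abs_le.mp (nu_abs_le_one h hb 0)
          rw [dot_neg, dot_lit]
          nlinarith
        · apply use ![-δ, 1, 0] m3
          intro ν hb hx1
          have hk := key ν hb hx1
          have hν1 : ν 1 ≤ -(2 * δ) := by
            have hν1np : ν 1 ≤ 0 := by nlinarith
            nlinarith [abs_le.mp (hxabs 1)]
          have hν0 := abs_le.mp (nu_abs_le_one h hb 0)
          rw [dot_lit]
          nlinarith
      · -- vertical: β < |x 2|, so |x 1| ≤ β
        push_neg at h2b
        have hx1β : |x 1| ≤ β := hβpair x hxA 2 1 (by decide) h2b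
        apply branchV _ (by intro h0'; rw [h0', abs_zero] at h2b; linarith)
        intro ν hb hx1
        rw [dot3, h0, mul_zero] at hx1
        have hb1 : ν 1 * x 1 ≤ β := by
          calc ν 1 * x 1 ≤ |ν 1 * x 1| := le_abs_self _
          _ = |ν 1| * |x 1| := abs_mul _ _
          _ ≤ 1 * β := mul_le_mul (nu_abs_le_one h hb 1) hx1β (abs_nonneg _) zero_le_one
          _ = β := one_mul β
        linarith
    · by_cases h1 : x 1 = 0
      · by_cases h2b : |x 2| ≤ β
        · -- P1 family
          have key : ∀ ν : Fin 3 → ℝ, (∀ y ∈ A, dot ν y ≤ 1) → dot ν x = 1 →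
              2 * δ ≤ ν 0 * x 0 := by
            intro ν hb hx1
            rw [dot3, h1, mul_zero] at hx1
            have hb2 : ν 2 * x 2 ≤ β := by
              calc ν 2 * x 2 ≤ |ν 2 * x 2| := le_abs_self _
              _ = |ν 2| * |x 2| := abs_mul _ _
              _ ≤ 1 * β := mul_le_mul (nu_abs_le_one h hb 2) h2b (abs_nonneg _) zero_le_one
              _ = β := one_mul β
            linarith
          rcases lt_or_gt_of_ne h0 with hx0sgn | hx0sgn
          · apply use ![1, δ, 0] m1
            intro ν hb hx1
            have hk := key ν hb hx1
            have hν0 : ν 0 ≤ -(2 * δ) := by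
              have hν0np : ν 0 ≤ 0 := by nlinarith
              nlinarith [abs_le.mp (hxabs 0)]
            have hν1 := abs_le.mp (nu_abs_le_one h hb 1)
            rw [dot_lit]
            nlinarith
          · apply use (-![1, δ, 0]) m2
            intro ν hb hx1
            have hk := key ν hb hx1
            have hν0 : 2 * δ ≤ ν 0 := by
              have hν0nn : 0 ≤ ν 0 := by nlinarith
              nlinarith [abs_le.mp (hxabs 0)]
            have hν1 := abs_le.mp (nu_abs_le_one h hb 1)
            rw [dot_neg, dot_lit]
            nlinarith
        · -- vertical: β < |x 2|, so |x 0| ≤ β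
          push_neg at h2b
          have hx0β : |x 0| ≤ β := hβpair x hxA 2 0 (by decide) h2b
          apply branchV _ (by intro h0'; rw [h0', abs_zero] at h2b; linarith)
          intro ν hb hx1
          rw [dot3, h1, mul_zero] at hx1
          have hb0 : ν 0 * x 0 ≤ β := by
            calc ν 0 * x 0 ≤ |ν 0 * x 0| := le_abs_self _
            _ = |ν 0| * |x 0| := abs_mul _ _
            _ ≤ 1 * β := mul_le_mul (nu_abs_le_one h hb 0) hx0β (abs_nonneg _) zero_le_one
            _ = β := one_mul β
          linarith
      · -- planar 4-branch: x 0 ≠ 0, x 1 ≠ 0, |x 2| < 1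
        have final : ∀ ν : Fin 3 → ℝ, (∀ y ∈ A, dot ν y ≤ 1) → dot ν x = 1 →
            ν 0 = 0 → ν 1 = 0 → False := by
          intro ν hb hx1 e0 e1
          rw [dot3, e0, e1, zero_mul, zero_mul, zero_add, zero_add] at hx1
          have : |ν 2 * x 2| < 1 := by
            rw [abs_mul]
            calc |ν 2| * |x 2| ≤ 1 * |x 2| :=
              mul_le_mul_of_nonneg_right (nu_abs_le_one h hb 2) (abs_nonneg _)
            _ = |x 2| := one_mul _
            _ < 1 := hx2lt
          rw [hx1] at this
          norm_num at this
        have signle : ∀ (a b : ℝ), 0 ≤ a * b → b < 0 → a ≤ 0 := by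
          intro a b hab hb
          by_contra hc
          push_neg at hc
          nlinarith
        have signge : ∀ (a b : ℝ), 0 ≤ a * b → 0 < b → 0 ≤ a := by
          intro a b hab hb
          by_contra hc
          push_neg at hc
          nlinarith
        have zero_of : ∀ (a : ℝ), a * δ ≤ 0 → 0 ≤ a * δ → a = 0 := by
          intro a h1 h2
          rcases mul_eq_zero.mp (le_antisymm h1 h2) with h' | h'
          · exact h'
          · exact absurd h' hδ0.ne'
        rcases lt_or_gt_of_ne h0 with h0n | h0p <;> rcases lt_or_gt_of_ne h1 with h1n | h1p
        · -- x0 < 0, x1 < 0 : d = (1, δ, 0)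
          apply use ![1, δ, 0] m1
          intro ν hb hx1
          have p0 := prod_nonneg_of h hxA hb hx1 0
          have p1 := prod_nonneg_of h hxA hb hx1 1
          have s0 : ν 0 ≤ 0 := signle _ _ p0 h0n
          have s1 : ν 1 ≤ 0 := signle _ _ p1 h1n
          rw [dot_lit]
          by_contra hge
          push_neg at hge
          have hm : ν 1 * δ ≤ 0 := mul_nonpos_of_nonpos_of_nonneg s1 hδ0.le
          have e0 : ν 0 = 0 := le_antisymm s0 (by linarith)
          have e1 : ν 1 = 0 := zero_of _ hm (by linarith)
          exact final ν hb hx1 e0 e1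
        · -- x0 < 0, x1 > 0 : d = (δ,−1,0)
          apply use (-![-δ, 1, 0]) m4
          intro ν hb hx1
          have p0 := prod_nonneg_of h hxA hb hx1 0
          have p1 := prod_nonneg_of h hxA hb hx1 1
          have s0 : ν 0 ≤ 0 := signle _ _ p0 h0n
          have s1 : 0 ≤ ν 1 := signge _ _ p1 h1p
          rw [dot_neg, dot_lit]
          by_contra hge
          push_neg at hge
          -- hge : 0 ≤ -(ν 0 * -δ + ν 1 * 1 + ν 2 * 0), i.e. ν 0 * δ ≥ ν 1 ≥ 0
          have hm : ν 0 * δ ≤ 0 := mul_nonpos_of_nonpos_of_nonneg s0 hδ0.le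
          have e1 : ν 1 = 0 := le_antisymm (by linarith) s1
          have e0 : ν 0 = 0 := zero_of _ hm (by linarith)
          exact final ν hb hx1 e0 e1
        · -- x0 > 0, x1 < 0 : d = (−δ,1,0)
          apply use ![-δ, 1, 0] m3
          intro ν hb hx1
          have p0 := prod_nonneg_of h hxA hb hx1 0
          have p1 := prod_nonneg_of h hxA hb hx1 1
          have s0 : 0 ≤ ν 0 := signge _ _ p0 h0p
          have s1 : ν 1 ≤ 0 := signle _ _ p1 h1n
          rw [dot_lit]
          by_contra hge
          push_neg at hge
          -- hge : 0 ≤ ν 0 * -δ + ν 1 * 1 + ν 2 * 0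
          have hm : 0 ≤ ν 0 * δ := mul_nonneg s0 hδ0.le
          have e1 : ν 1 = 0 := le_antisymm s1 (by linarith)
          have e0 : ν 0 = 0 := zero_of _ (by linarith) hm
          exact final ν hb hx1 e0 e1
        · -- x0 > 0, x1 > 0 : d = -(1, δ, 0)
          apply use (-![1, δ, 0]) m2
          intro ν hb hx1
          have p0 := prod_nonneg_of h hxA hb hx1 0
          have p1 := prod_nonneg_of h hxA hb hx1 1
          have s0 : 0 ≤ ν 0 := signge _ _ p0 h0p
          have s1 : 0 ≤ ν 1 := signge _ _ p1 h1p
          rw [dot_neg, dot_lit]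
          by_contra hge
          push_neg at hge
          -- hge : 0 ≤ -(ν 0 * 1 + ν 1 * δ + ν 2 * 0)
          have hm : 0 ≤ ν 1 * δ := mul_nonneg s1 hδ0.le
          have e0 : ν 0 = 0 := le_antisymm (by linarith) s0
          have e1 : ν 1 = 0 := zero_of _ (by linarith) hm
          exact final ν hb hx1 e0 e1

/-- coordinate permutation as a homeomorphism -/
def permHomeo (σ : Equiv.Perm (Fin 3)) : (Fin 3 → ℝ) ≃ₜ (Fin 3 → ℝ) where
  toFun w := w ∘ σ
  invFun w := w ∘ σ.symm
  left_inv w := by funext i; simp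
  right_inv w := by funext i; simp
  continuous_toFun := continuous_pi fun i => continuous_apply (σ i)
  continuous_invFun := continuous_pi fun i => continuous_apply (σ.symm i)

theorem stmt7' (B : Set (Fin 3 → ℝ)) (hB : memU B)
    (hpairs : ∀ i j : Fin 3, i ≠ j → stdB i + stdB j ∉ B) :
    ∃ δ : ℝ, 0 < δ ∧ δ < 1 ∧ ∃ σ : Equiv.Perm (Fin 3),
      IlluminatesSet B ((fun d => d ∘ σ) ''
        ({![1, δ, 0], -![1, δ, 0], ![-δ, 1, 0], -![-δ, 1, 0],
          ![0, 0, 1], -![0, 0, 1]} : Set (Fin 3 → ℝ))) ∧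
      illumNumber B ≤ 6 := by
  obtain ⟨⟨hconv, hcomp, hinte⟩, hunc, hei⟩ := hB
  have hG : GoodBody B := ⟨hconv, hcomp, hinte, hunc, hei, hpairs⟩
  -- choose a good slot k
  obtain ⟨k, hkgood⟩ : ∃ k : Fin 3, ¬ badSlot B k := by
    by_cases hb2 : badSlot B 2
    · exact ⟨0, fun hb0 => bad_unique hG (by decide) hb0 hb2⟩
    · exact ⟨2, hb2⟩
  set σ : Equiv.Perm (Fin 3) := Equiv.swap 2 k with hσdef
  have hσσ : ∀ i, σ (σ i) = i := fun i => Equiv.swap_apply_self _ _ _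
  have hσk : σ k = 2 := Equiv.swap_apply_right _ _
  set A : Set (Fin 3 → ℝ) := (fun w : Fin 3 → ℝ => w ∘ σ) ⁻¹' B with hAdef
  have hmemA : ∀ w : Fin 3 → ℝ, w ∈ A ↔ w ∘ σ ∈ B := fun w => Iff.rfl
  have hback : ∀ w : Fin 3 → ℝ, (w ∘ σ) ∘ σ = w := by
    intro w; funext i; simp [Function.comp, hσσ]
  -- A as preimage of the homeomorphism
  have hAH : A = (permHomeo σ) ⁻¹' B := rfl
  have hIntA : interior A = (fun w : Fin 3 → ℝ => w ∘ σ) ⁻¹' interior B := by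
    rw [hAH, ← Homeomorph.preimage_interior]; rfl
  have hFrA : frontier A = (fun w : Fin 3 → ℝ => w ∘ σ) ⁻¹' frontier B := by
    rw [hAH, ← Homeomorph.preimage_frontier]; rfl
  have hstdσ : ∀ i : Fin 3, stdB i ∘ σ = stdB (σ i) := by
    intro i; funext j
    show stdB i (σ j) = stdB (σ i) j
    rw [stdB_apply, stdB_apply]
    by_cases hj : σ j = i
    · rw [if_pos hj, if_pos (by rw [← hj, hσσ])]
    · rw [if_neg hj, if_neg (fun e => hj (by rw [e, hσσ]))]
  have hGA : GoodBody A := by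
    constructor
    · intro w1 hw1 w2 hw2 a b ha hb hab
      show (a • w1 + b • w2) ∘ σ ∈ B
      have : (a • w1 + b • w2) ∘ σ = a • (w1 ∘ σ) + b • (w2 ∘ σ) := by
        funext i; simp [Function.comp]
      rw [this]
      exact hconv hw1 hw2 ha hb hab
    · have hAim : A = (fun w : Fin 3 → ℝ => w ∘ σ) '' B := by
        ext w
        constructor
        · intro hw; exact ⟨w ∘ σ, hw, hback w⟩
        · rintro ⟨z, hz, rfl⟩
          show (z ∘ σ) ∘ σ ∈ B
          rw [hback]; exact hz
      rw [hAim]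
      exact hcomp.image (continuous_pi fun i => continuous_apply (σ i))
    · obtain ⟨z, hz⟩ := hinte
      refine ⟨z ∘ σ, ?_⟩
      rw [hIntA]
      show (z ∘ σ) ∘ σ ∈ interior B
      rw [hback]; exact hz
    · intro w hw ε hε
      show (fun i => ε i * w i) ∘ σ ∈ B
      have : (fun i => ε i * w i) ∘ σ = fun i => (ε ∘ σ) i * (w ∘ σ) i := rfl
      rw [this]
      exact hunc (w ∘ σ) hw (ε ∘ σ) (fun i => hε (σ i))
    · intro i
      rw [hFrA]
      show stdB i ∘ σ ∈ frontier B
      rw [hstdσ]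
      exact hei (σ i)
    · intro i j hij hmem
      have : (stdB i + stdB j) ∘ σ ∈ B := hmem
      rw [show (stdB i + stdB j) ∘ σ = stdB i ∘ σ + stdB j ∘ σ from rfl,
        hstdσ, hstdσ] at this
      exact hpairs (σ i) (σ j) (fun e => hij (σ.injective e)) this
  have hdot_comp : ∀ ν y : Fin 3 → ℝ, dot (ν ∘ σ) (y ∘ σ) = dot ν y := by
    intro ν y
    exact Equiv.sum_comp σ (fun j => ν j * y j)
  have hAgood : ¬ badSlot A 2 := by
    rintro ⟨X, ν, hXA, hXpos, hX2, hbν, hνX, hνpos, hν2⟩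
    apply hkgood
    refine ⟨X ∘ σ, ν ∘ σ, hXA, fun i => hXpos (σ i), by rw [Function.comp_apply, hσk]; exact hX2,
      ?_, ?_, fun i => hνpos (σ i), by rw [Function.comp_apply, hσk]; exact hν2⟩
    · intro y hy
      have hyA : y ∘ σ ∈ A := by
        show (y ∘ σ) ∘ σ ∈ B
        rw [hback]; exact hy
      have := hbν (y ∘ σ) hyA
      rwa [← hdot_comp ν (y ∘ σ), hback] at this
      -- careful: dot (ν∘σ) y vs dot ν ... 
    · rw [show dot (ν ∘ σ) (X ∘ σ) = dot ν X from hdot_comp ν X]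
      exact hνX
  obtain ⟨δ, hδ0, hδ1, hIllA⟩ := main_illum hGA hAgood
  set S : Set (Fin 3 → ℝ) := {![1, δ, 0], -![1, δ, 0], ![-δ, 1, 0], -![-δ, 1, 0],
        ![0, 0, 1], -![0, 0, 1]} with hSdef
  have hIllB : IlluminatesSet B ((fun d => d ∘ σ) '' S) := by
    intro x hx
    have hx' : x ∘ σ ∈ frontier A := by
      rw [hFrA]
      show (x ∘ σ) ∘ σ ∈ frontier B
      rw [hback]; exact hx
    obtain ⟨d₀, hd₀, ε, hε, hint⟩ := hIllA (x ∘ σ) hx'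
    refine ⟨d₀ ∘ σ, Set.mem_image_of_mem _ hd₀, ε, hε, ?_⟩
    rw [hIntA] at hint
    have he : ((x ∘ σ) + ε • d₀) ∘ σ = x + ε • (d₀ ∘ σ) := by
      funext i
      simp [Function.comp, hσσ]
    rw [← he]
    exact hint
  refine ⟨δ, hδ0, hδ1, σ, hIllB, ?_⟩
  -- illumination number bound
  set L : List (Fin 3 → ℝ) :=
    [![1, δ, 0], -![1, δ, 0], ![-δ, 1, 0], -![-δ, 1, 0], ![0, 0, 1], -![0, 0, 1]].map
      (fun d => d ∘ σ) with hLdef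
  have hcoe : (L.toFinset : Set (Fin 3 → ℝ)) = (fun d => d ∘ σ) '' S := by
    ext w
    simp only [List.coe_toFinset, List.mem_map, Set.mem_setOf_eq, Set.mem_image, hLdef, hSdef]
    constructor
    · rintro ⟨a, ha, rfl⟩
      refine ⟨a, ?_, rfl⟩
      simp only [List.mem_cons, List.not_mem_nil, or_false] at ha
      simp only [Set.mem_insert_iff, Set.mem_singleton_iff]
      tauto
    · rintro ⟨a, ha, rfl⟩
      refine ⟨a, ?_, rfl⟩
      simp only [Set.mem_insert_iff, Set.mem_singleton_iff] at ha
      simp only [List.mem_cons, List.not_mem_nil, or_false]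
      tauto
  have hne : ∀ d ∈ L.toFinset, d ≠ (0 : Fin 3 → ℝ) := by
    intro d hd
    rw [List.mem_toFinset, hLdef, List.mem_map] at hd
    obtain ⟨a, ha, rfl⟩ := hd
    intro h0
    have ha0 : ∀ j, a j = 0 := by
      intro j
      have := congrFun h0 (σ.symm j)
      simpa [Function.comp] using this
    simp only [List.mem_cons, List.not_mem_nil, or_false] at ha
    rcases ha with rfl | rfl | rfl | rfl | rfl | rfl
    · have := ha0 0; norm_num at this
    · have := ha0 0; norm_num at this
    · have := ha0 1; norm_num at this
    · have := ha0 1; norm_num at this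
    · have := ha0 2; simp [Matrix.cons_val] at this
    · have := ha0 2; simp [Matrix.cons_val] at this
  have hmem6 : L.toFinset.card ∈ {m | ∃ D : Finset (Fin 3 → ℝ), D.card = m ∧
      (∀ d ∈ D, d ≠ 0) ∧ IlluminatesSet B ↑D} := by
    refine ⟨L.toFinset, rfl, hne, ?_⟩
    rw [hcoe]
    exact hIllB
  calc illumNumber B ≤ L.toFinset.card := Nat.sInf_le hmem6
  _ ≤ L.length := List.toFinset_card_le L
  _ = 6 := by rw [hLdef]; simp

end

end Stmt7

/-- If `B ∈ 𝒰³` contains no point `e_i + e_j` (`i ≠ j`), then some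
coordinate permutation of `{±(1,δ,0), ±(-δ,1,0), ±(0,0,1)}` illuminates `B`, for
a suitable `δ ∈ (0,1)`; in particular `𝕀(B) ≤ 6`. -/
theorem stmt7 (B : Set (Fin 3 → ℝ)) (hB : memU B)
    (hpairs : ∀ i j : Fin 3, i ≠ j → stdB i + stdB j ∉ B) :
    ∃ δ : ℝ, 0 < δ ∧ δ < 1 ∧ ∃ σ : Equiv.Perm (Fin 3),
      IlluminatesSet B ((fun d => d ∘ σ) ''
        ({![1, δ, 0], -![1, δ, 0], ![-δ, 1, 0], -![-δ, 1, 0],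
          ![0, 0, 1], -![0, 0, 1]} : Set (Fin 3 → ℝ))) ∧
      illumNumber B ≤ 6 :=
  Stmt7.stmt7' B hB hpairs
end

section
/- Let B ∈ 𝒰³ satisfy (1,1,0) ∈ B and (1,0,1) ∈ B but (0,1,1) ∉ B, and suppose B is not a parallelepiped. Then for every ε ∈ (0,1], the point (1−ε, 1/2, 1/2) is an interior point of B. -/
set_option maxHeartbeats 1000000


open Set

noncomputable def myT : (Fin 3 → ℝ) ≃ₗ[ℝ] (Fin 3 → ℝ) where
  toFun y := ![y 0, (y 1 + y 2)/2, (y 1 - y 2)/2]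
  invFun y := ![y 0, y 1 + y 2, y 1 - y 2]
  map_add' x y := by funext k; fin_cases k <;> simp <;> ring
  map_smul' c x := by funext k; fin_cases k <;> simp <;> ring
  left_inv x := by funext k; fin_cases k <;> simp <;> ring
  right_inv x := by funext k; fin_cases k <;> simp <;> ring

lemma myT_apply (v : Fin 3 → ℝ) : myT v = ![v 0, (v 1 + v 2)/2, (v 1 - v 2)/2] := rfl

lemma fdec (f : (Fin 3 → ℝ) →L[ℝ] ℝ) (y : Fin 3 → ℝ) :
    f y = y 0 * f (stdB 0) + y 1 * f (stdB 1) + y 2 * f (stdB 2) := by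
  have hy : y = y 0 • (stdB 0 : Fin 3 → ℝ) + y 1 • (stdB 1 : Fin 3 → ℝ)
      + y 2 • (stdB 2 : Fin 3 → ℝ) := by
    funext k; fin_cases k <;> simp [stdB, Pi.single_apply]
  nth_rewrite 1 [hy]
  simp [map_add, map_smul, smul_eq_mul]

/-- If `B ∈ 𝒰³` contains `(1,1,0)` and `(1,0,1)` but not `(0,1,1)`,
and `B` is not a parallelepiped, then `(1-ε, 1/2, 1/2)` is in the interior of `B`
for every `ε ∈ (0,1]`. -/
theorem stmt9 (B : Set (Fin 3 → ℝ)) (hB : memU B)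
    (h110 : (![1, 1, 0] : Fin 3 → ℝ) ∈ B)
    (h101 : (![1, 0, 1] : Fin 3 → ℝ) ∈ B)
    (h011 : (![0, 1, 1] : Fin 3 → ℝ) ∉ B)
    (hpar : ¬ IsParallelepiped B) :
    ∀ ε : ℝ, 0 < ε → ε ≤ 1 →
      (![1 - ε, 1/2, 1/2] : Fin 3 → ℝ) ∈ interior B := by
  obtain ⟨⟨hconv, hcomp, hint⟩, huncond, hfr⟩ := hB
  have hBcl : IsClosed B := hcomp.isClosed
  -- 0 is an interior point
  obtain ⟨u, hu⟩ := hint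
  have hnegu : (fun i => (-1 : ℝ) * u i) ∈ B :=
    huncond u (interior_subset hu) (fun _ => -1) (fun _ => Or.inr rfl)
  have h0 : (0 : Fin 3 → ℝ) ∈ interior B := by
    have h := hconv.combo_interior_self_mem_interior hu hnegu
      (a := (1:ℝ)/2) (b := (1:ℝ)/2) (by norm_num) (by norm_num) (by norm_num)
    have : ((1:ℝ)/2) • u + ((1:ℝ)/2) • (fun i => (-1 : ℝ) * u i) = (0 : Fin 3 → ℝ) := by
      funext i; simp
    rwa [this] at h
  -- coordinate zeroing
  have hupd : ∀ y ∈ B, ∀ j : Fin 3, Function.update y j 0 ∈ B := by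
    intro y hy j
    have hflip : (fun k => (if k = j then (-1:ℝ) else 1) * y k) ∈ B :=
      huncond y hy _ (fun k => by by_cases h : k = j <;> simp [h])
    have h := hconv hy hflip (by norm_num : (0:ℝ) ≤ 1/2) (by norm_num : (0:ℝ) ≤ 1/2)
      (by norm_num)
    have heq : ((1:ℝ)/2) • y + ((1:ℝ)/2) • (fun k => (if k = j then (-1:ℝ) else 1) * y k)
        = Function.update y j 0 := by
      funext k
      by_cases h : k = j
      · subst h; simp [Function.update]
      · simp [Function.update, h]; ring
    rwa [heq] at h
  -- first coordinate bounded by 1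
  have h0bd : ∀ y ∈ B, |y 0| ≤ 1 := by
    intro y hy
    by_contra hgt
    push_neg at hgt
    have hz1 : Function.update (Function.update y 1 0) 2 0 ∈ B := hupd _ (hupd y hy 1) 2
    set s : ℝ := if 0 ≤ y 0 then 1 else -1 with hs
    have hz2 : (fun k => (![s, 1, 1] : Fin 3 → ℝ) k *
        (Function.update (Function.update y 1 0) 2 0) k) ∈ B := by
      apply huncond _ hz1
      intro k; fin_cases k
      · by_cases h : 0 ≤ y 0 <;> simp [hs, h]
      · simp
      · simp
    have hzeq : (fun k => (![s, 1, 1] : Fin 3 → ℝ) k *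
        (Function.update (Function.update y 1 0) 2 0) k) = (![|y 0|, 0, 0] : Fin 3 → ℝ) := by
      funext k; fin_cases k
      · simp only [Function.update]
        rcases le_or_gt 0 (y 0) with h | h
        · simp [hs, if_pos h, abs_of_nonneg h]
        · simp [hs, if_neg (not_le.2 h), abs_of_neg h]
      · simp [Function.update]
      · simp [Function.update]
    rw [hzeq] at hz2
    have hy0 : (0:ℝ) < |y 0| := by linarith
    have hmem : ((1:ℝ)/|y 0|) • (![|y 0|, 0, 0] : Fin 3 → ℝ)
        + (1 - 1/|y 0|) • (0 : Fin 3 → ℝ) ∈ interior B := by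
      apply hconv.combo_self_interior_mem_interior hz2 h0
      · positivity
      · have : 1/|y 0| < 1 := by rw [div_lt_one hy0]; exact hgt
        linarith
      · ring
    have heq : ((1:ℝ)/|y 0|) • (![|y 0|, 0, 0] : Fin 3 → ℝ)
        + (1 - 1/|y 0|) • (0 : Fin 3 → ℝ) = stdB 0 := by
      funext k; fin_cases k <;> simp [stdB, Pi.single_apply]
      field_simp
    rw [heq] at hmem
    exact (hfr 0).2 hmem
  intro ε hε hε1
  by_contra hx
  set x : Fin 3 → ℝ := ![1 - ε, 1/2, 1/2] with hxdef
  obtain ⟨f, hf⟩ := geometric_hahn_banach_open_point (hconv.interior) isOpen_interior hx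
  have hfx0 : 0 < f x := by
    have := hf 0 h0
    simpa using this
  have fle : ∀ y ∈ B, f y ≤ f x := by
    intro y hy
    by_contra hlt
    push_neg at hlt
    have hfy : 0 < f y := lt_trans hfx0 hlt
    set t : ℝ := (f y - f x) / f y with htdef
    have ht0 : 0 < t := div_pos (by linarith) hfy
    have ht1 : 0 ≤ 1 - t := by
      have : t ≤ 1 := by rw [htdef, div_le_one hfy]; linarith
      linarith
    have hmem : (1 - t) • y + t • (0 : Fin 3 → ℝ) ∈ interior B :=
      hconv.combo_self_interior_mem_interior hy h0 ht1 ht0 (by ring)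
    have h1 := hf _ hmem
    rw [map_add, map_smul, map_smul, map_zero, smul_zero, add_zero, smul_eq_mul] at h1
    have h2 : (1 - t) * f y = f x := by
      rw [htdef]; field_simp; ring
    linarith
  have hm : (![(1:ℝ), 1/2, 1/2] : Fin 3 → ℝ) ∈ B := by
    have h := hconv h110 h101 (by norm_num : (0:ℝ) ≤ 1/2) (by norm_num : (0:ℝ) ≤ 1/2)
      (by norm_num)
    have heq : ((1:ℝ)/2) • (![1,1,0] : Fin 3 → ℝ) + ((1:ℝ)/2) • (![1,0,1] : Fin 3 → ℝ)
        = ![(1:ℝ), 1/2, 1/2] := by funext k; fin_cases k <;> norm_num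
    rwa [heq] at h
  have hm' : (![(-1:ℝ), 1/2, 1/2] : Fin 3 → ℝ) ∈ B := by
    have h := huncond _ hm ![-1,1,1] (by intro k; fin_cases k <;> simp)
    have heq : (fun i => (![(-1:ℝ),1,1] : Fin 3 → ℝ) i * (![(1:ℝ), 1/2, 1/2] : Fin 3 → ℝ) i)
        = ![(-1:ℝ), 1/2, 1/2] := by funext k; fin_cases k <;> norm_num
    rwa [heq] at h
  set a := f (stdB 0) with ha
  set b := f (stdB 1) with hb
  set c := f (stdB 2) with hc
  have hvx : f x = (1 - ε) * a + (1/2) * b + (1/2) * c := by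
    rw [fdec f x, hxdef]; norm_num [Matrix.cons_val_two, Matrix.tail_cons, Matrix.head_cons]; rfl
  have e1 := fle _ hm
  have e2 := fle _ hm'
  have e3 := fle _ h110
  have e4 := fle _ h101
  rw [fdec] at e1 e2 e3 e4
  rw [hvx] at e1 e2 e3 e4
  norm_num [Matrix.cons_val_two, Matrix.tail_cons, Matrix.head_cons] at e1 e2 e3 e4
  rw [← hb] at e3
  rw [← hc] at e4
  have ha1 : ε * a ≤ 0 := by nlinarith [e1]
  have ha2 : 0 ≤ 2 * a - ε * a := by nlinarith [e2]
  have ha0 : a = 0 := by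
    rcases lt_trichotomy a 0 with h | h | h
    · nlinarith
    · exact h
    · nlinarith
  have hbpos : 0 < b := by
    rw [hvx, ha0] at hfx0
    -- e3 : a + b ≤ ..., e4 : a + c ≤ ...
    rw [ha0] at e3 e4
    nlinarith
  have hcb : c = b := by
    rw [ha0] at e3 e4
    linarith
  -- every point of B satisfies y 1 + y 2 ≤ 1
  have hsum : ∀ y ∈ B, y 1 + y 2 ≤ 1 := by
    intro y hy
    have h := fle y hy
    rw [fdec, hvx, ← ha, ← hb, ← hc, ha0, hcb] at h
    rcases le_or_gt (y 1 + y 2) 1 with h' | h'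
    · exact h'
    · nlinarith
  have habs : ∀ y ∈ B, |y 1| + |y 2| ≤ 1 := by
    intro y hy
    set s1 : ℝ := if 0 ≤ y 1 then 1 else -1 with hs1
    set s2 : ℝ := if 0 ≤ y 2 then 1 else -1 with hs2
    have hy' : (fun k => (![1, s1, s2] : Fin 3 → ℝ) k * y k) ∈ B := by
      apply huncond y hy
      intro k; fin_cases k
      · simp
      · by_cases h : 0 ≤ y 1 <;> simp [hs1, h]
      · by_cases h : 0 ≤ y 2 <;> simp [hs2, h]
    have h := hsum _ hy'
    have h1 : (![1, s1, s2] : Fin 3 → ℝ) 1 * y 1 = |y 1| := by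
      rcases le_or_gt 0 (y 1) with h' | h'
      · simp [hs1, if_pos h', abs_of_nonneg h']
      · simp [hs1, if_neg (not_le.2 h'), abs_of_neg h']
    have h2 : (![1, s1, s2] : Fin 3 → ℝ) 2 * y 2 = |y 2| := by
      rcases le_or_gt 0 (y 2) with h' | h'
      · simp [hs2, if_pos h', abs_of_nonneg h']
      · simp [hs2, if_neg (not_le.2 h'), abs_of_neg h']
    rw [h1, h2] at h
    exact h
  -- every point with |y 0| ≤ 1 and |y 1| + |y 2| ≤ 1 is in B
  have key : ∀ y : Fin 3 → ℝ, |y 0| ≤ 1 → |y 1| + |y 2| ≤ 1 → y ∈ B := by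
    intro y hy0 hy12
    set s1 : ℝ := if 0 ≤ y 1 then 1 else -1 with hs1
    set s2 : ℝ := if 0 ≤ y 2 then 1 else -1 with hs2
    have hv1 : (![1, s1, 0] : Fin 3 → ℝ) ∈ B := by
      have h := huncond _ h110 ![1, s1, s2] (by
        intro k; fin_cases k
        · simp
        · by_cases h : 0 ≤ y 1 <;> simp [hs1, h]
        · by_cases h : 0 ≤ y 2 <;> simp [hs2, h])
      have heq : (fun i => (![(1:ℝ), s1, s2] : Fin 3 → ℝ) i * (![1, 1, 0] : Fin 3 → ℝ) i)
          = (![1, s1, 0] : Fin 3 → ℝ) := by funext k; fin_cases k <;> simp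
      rwa [heq] at h
    have hv2 : (![1, 0, s2] : Fin 3 → ℝ) ∈ B := by
      have h := huncond _ h101 ![1, s1, s2] (by
        intro k; fin_cases k
        · simp
        · by_cases h : 0 ≤ y 1 <;> simp [hs1, h]
        · by_cases h : 0 ≤ y 2 <;> simp [hs2, h])
      have heq : (fun i => (![(1:ℝ), s1, s2] : Fin 3 → ℝ) i * (![1, 0, 1] : Fin 3 → ℝ) i)
          = (![1, 0, s2] : Fin 3 → ℝ) := by funext k; fin_cases k <;> simp
      rwa [heq] at h
    have hv0 : (![(1:ℝ), 0, 0] : Fin 3 → ℝ) ∈ B := by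
      have hneg : (![(1:ℝ), -1, 0] : Fin 3 → ℝ) ∈ B := by
        have h := huncond _ h110 ![1, -1, 1] (by intro k; fin_cases k <;> simp)
        have heq : (fun i => (![(1:ℝ), -1, 1] : Fin 3 → ℝ) i * (![1, 1, 0] : Fin 3 → ℝ) i)
            = (![(1:ℝ), -1, 0] : Fin 3 → ℝ) := by funext k; fin_cases k <;> simp
        rwa [heq] at h
      have h := hconv h110 hneg (by norm_num : (0:ℝ) ≤ 1/2) (by norm_num : (0:ℝ) ≤ 1/2)
        (by norm_num)
      have heq : ((1:ℝ)/2) • (![1,1,0] : Fin 3 → ℝ) + ((1:ℝ)/2) • (![(1:ℝ),-1,0] : Fin 3 → ℝ)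
          = (![(1:ℝ), 0, 0] : Fin 3 → ℝ) := by funext k; fin_cases k <;> norm_num
      rwa [heq] at h
    -- points of the form (1, r, 0) and (1, 0, r) with |r| ≤ 1
    have hedge1 : ∀ r : ℝ, |r| ≤ 1 → (![(1:ℝ), r, 0] : Fin 3 → ℝ) ∈ B := by
      intro r hr
      set sr : ℝ := if 0 ≤ r then 1 else -1 with hsr
      have hv : (![(1:ℝ), sr, 0] : Fin 3 → ℝ) ∈ B := by
        have h := huncond _ h110 ![1, sr, 1] (by
          intro k; fin_cases k
          · simp
          · by_cases h : 0 ≤ r <;> simp [hsr, h]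
          · simp)
        have heq : (fun i => (![(1:ℝ), sr, 1] : Fin 3 → ℝ) i * (![1, 1, 0] : Fin 3 → ℝ) i)
            = (![(1:ℝ), sr, 0] : Fin 3 → ℝ) := by funext k; fin_cases k <;> simp
        rwa [heq] at h
      have h := hconv hv hv0 (abs_nonneg r) (by linarith : (0:ℝ) ≤ 1 - |r|) (by ring)
      have heq : |r| • (![(1:ℝ), sr, 0] : Fin 3 → ℝ) + (1 - |r|) • (![(1:ℝ), 0, 0] : Fin 3 → ℝ)
          = (![(1:ℝ), r, 0] : Fin 3 → ℝ) := by
        funext k; fin_cases k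
        · show |r| * 1 + (1 - |r|) * 1 = 1
          ring
        · show |r| * sr + (1 - |r|) * 0 = r
          rcases le_or_gt 0 r with h' | h'
          · rw [hsr, if_pos h', abs_of_nonneg h']; ring
          · rw [hsr, if_neg (not_le.2 h'), abs_of_neg h']; ring
        · show |r| * 0 + (1 - |r|) * 0 = 0
          ring
      rwa [heq] at h
    have hedge2 : ∀ r : ℝ, |r| ≤ 1 → (![(1:ℝ), 0, r] : Fin 3 → ℝ) ∈ B := by
      intro r hr
      set sr : ℝ := if 0 ≤ r then 1 else -1 with hsr
      have hv : (![(1:ℝ), 0, sr] : Fin 3 → ℝ) ∈ B := by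
        have h := huncond _ h101 ![1, 1, sr] (by
          intro k; fin_cases k
          · simp
          · simp
          · by_cases h : 0 ≤ r <;> simp [hsr, h])
        have heq : (fun i => (![(1:ℝ), 1, sr] : Fin 3 → ℝ) i * (![1, 0, 1] : Fin 3 → ℝ) i)
            = (![(1:ℝ), 0, sr] : Fin 3 → ℝ) := by funext k; fin_cases k <;> simp
        rwa [heq] at h
      have h := hconv hv hv0 (abs_nonneg r) (by linarith : (0:ℝ) ≤ 1 - |r|) (by ring)
      have heq : |r| • (![(1:ℝ), 0, sr] : Fin 3 → ℝ) + (1 - |r|) • (![(1:ℝ), 0, 0] : Fin 3 → ℝ)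
          = (![(1:ℝ), 0, r] : Fin 3 → ℝ) := by
        funext k; fin_cases k
        · show |r| * 1 + (1 - |r|) * 1 = 1
          ring
        · show |r| * 0 + (1 - |r|) * 0 = 0
          ring
        · show |r| * sr + (1 - |r|) * 0 = r
          rcases le_or_gt 0 r with h' | h'
          · rw [hsr, if_pos h', abs_of_nonneg h']; ring
          · rw [hsr, if_neg (not_le.2 h'), abs_of_neg h']; ring
      rwa [heq] at h
    -- the point (1, y 1, y 2)
    have hw : (![(1:ℝ), y 1, y 2] : Fin 3 → ℝ) ∈ B := by
      rcases eq_or_lt_of_le (le_trans (le_add_of_nonneg_right (abs_nonneg (y 2))) hy12)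
        with h1 | h1
      · -- |y 1| = 1, hence y 2 = 0
        have hy2 : y 2 = 0 := by
          have : |y 2| ≤ 0 := by linarith [hy12, h1.symm]
          have := abs_nonneg (y 2)
          have : |y 2| = 0 := le_antisymm ‹|y 2| ≤ 0› this
          exact abs_eq_zero.mp this
        rw [hy2]
        exact hedge1 (y 1) (by linarith [hy12, abs_nonneg (y 2)])
      · -- |y 1| < 1
        set d : ℝ := y 2 / (1 - |y 1|) with hd
        have hden : (0:ℝ) < 1 - |y 1| := by linarith
        have hdle : |d| ≤ 1 := by
          rw [hd, abs_div, abs_of_pos hden, div_le_one hden]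
          linarith
        have hD := hedge2 d hdle
        have hs1abs : |s1| ≤ 1 := by
          rcases le_or_gt 0 (y 1) with h' | h' <;> simp [hs1, h', not_le.2]
        have hE := hedge1 s1 hs1abs
        have h := hconv hE hD (abs_nonneg (y 1)) (le_of_lt hden) (by ring)
        have heq : |y 1| • (![(1:ℝ), s1, 0] : Fin 3 → ℝ)
            + (1 - |y 1|) • (![(1:ℝ), 0, d] : Fin 3 → ℝ)
            = (![(1:ℝ), y 1, y 2] : Fin 3 → ℝ) := by
          funext k; fin_cases k
          · show |y 1| * 1 + (1 - |y 1|) * 1 = 1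
            ring
          · show |y 1| * s1 + (1 - |y 1|) * 0 = y 1
            rcases le_or_gt 0 (y 1) with h' | h'
            · rw [hs1, if_pos h', abs_of_nonneg h']; ring
            · rw [hs1, if_neg (not_le.2 h'), abs_of_neg h']; ring
          · show |y 1| * 0 + (1 - |y 1|) * d = y 2
            rw [hd]
            field_simp
            ring
        rwa [heq] at h
    have hw' : (![(-1:ℝ), y 1, y 2] : Fin 3 → ℝ) ∈ B := by
      have h := huncond _ hw ![-1, 1, 1] (by intro k; fin_cases k <;> simp)
      have heq : (fun i => (![(-1:ℝ), 1, 1] : Fin 3 → ℝ) i * (![(1:ℝ), y 1, y 2] : Fin 3 → ℝ) i)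
          = (![(-1:ℝ), y 1, y 2] : Fin 3 → ℝ) := by funext k; fin_cases k <;> simp
      rwa [heq] at h
    rw [abs_le] at hy0
    have h := hconv hw hw' (by linarith : (0:ℝ) ≤ (1 + y 0)/2) (by linarith : (0:ℝ) ≤ (1 - y 0)/2)
      (by ring)
    have heq : ((1 + y 0)/2) • (![(1:ℝ), y 1, y 2] : Fin 3 → ℝ)
        + ((1 - y 0)/2) • (![(-1:ℝ), y 1, y 2] : Fin 3 → ℝ) = y := by
      funext k; fin_cases k
      · show (1 + y 0)/2 * 1 + (1 - y 0)/2 * (-1) = y 0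
        ring
      · show (1 + y 0)/2 * y 1 + (1 - y 0)/2 * y 1 = y 1
        ring
      · show (1 + y 0)/2 * y 2 + (1 - y 0)/2 * y 2 = y 2
        ring
    rwa [heq] at h
  apply hpar
  refine ⟨myT.toAffineEquiv, ?_⟩
  ext y
  constructor
  · intro hy
    have hy0 := h0bd y hy
    have hy12 := habs y hy
    have habs1 : |y 1 + y 2| ≤ 1 := le_trans (abs_add_le _ _) hy12
    have habs2 : |y 1 - y 2| ≤ 1 := by
      refine le_trans ?_ hy12
      rw [sub_eq_add_neg]
      exact le_trans (abs_add_le _ _) (by rw [abs_neg])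
    rw [abs_le] at hy0 habs1 habs2
    refine ⟨![y 0, y 1 + y 2, y 1 - y 2], Set.mem_Icc.mpr ⟨?_, ?_⟩, ?_⟩
    · intro k; fin_cases k
      · exact hy0.1
      · exact habs1.1
      · exact habs2.1
    · intro k; fin_cases k
      · exact hy0.2
      · exact habs1.2
      · exact habs2.2
    · show myT _ = y
      rw [myT_apply]
      funext k; fin_cases k <;> norm_num [Matrix.cons_val_two, Matrix.tail_cons, Matrix.head_cons] <;> ring_nf <;> rfl
  · rintro ⟨v, hv, rfl⟩
    rw [Set.mem_Icc] at hv
    have hv10 := Pi.le_def.mp hv.1 0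
    have hv11 := Pi.le_def.mp hv.1 1
    have hv12 := Pi.le_def.mp hv.1 2
    have hv20 := Pi.le_def.mp hv.2 0
    have hv21 := Pi.le_def.mp hv.2 1
    have hv22 := Pi.le_def.mp hv.2 2
    have hTv : (myT.toAffineEquiv v : Fin 3 → ℝ) = ![v 0, (v 1 + v 2)/2, (v 1 - v 2)/2] := by
      show myT v = _
      rw [myT_apply]
    rw [hTv]
    apply key
    · show |v 0| ≤ 1
      rw [abs_le]; exact ⟨hv10, hv20⟩
    · show |(v 1 + v 2)/2| + |(v 1 - v 2)/2| ≤ 1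
      rcases abs_cases ((v 1 + v 2)/2) with ⟨h1, _⟩ | ⟨h1, _⟩ <;>
        rcases abs_cases ((v 1 - v 2)/2) with ⟨h2, _⟩ | ⟨h2, _⟩ <;>
        rw [h1, h2] <;> linarith
end

section
/- Let n ≥ 4 and let B ∈ 𝒰^n. Suppose there exists s₀ ∈ {1,…,n} such that 𝟙 − e_i ∈ B for all i ≠ s₀ while 𝟙 − e_{s₀} ∉ B. Then there exist δ ∈ (0,1) and a set D of directions with D = −D and |D| ≤ 2^n − 4 that illuminates B, where every d ∈ D has exactly one coordinate equal to ±1, at an index different from s₀, and all other coordinates equal to ±δ. In particular 𝕀(B) ≤ 2^n − 4. -/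
open Set

open Set Finset

/-- sign value of a boolean -/
def s11sv (b : Bool) : ℝ := if b then 1 else -1

lemma s11sv_abs (b : Bool) : |s11sv b| = 1 := by
  cases b <;> simp [s11sv]

lemma s11sv_neg (b : Bool) : s11sv (!b) = -s11sv b := by
  cases b <;> simp [s11sv]

lemma s11sv_ne_zero (b : Bool) : s11sv b ≠ 0 := by
  cases b <;> norm_num [s11sv]

/-- |a+e| = ||a|-|e|| when a*e ≤ 0 -/
lemma s11_abs_add (a e : ℝ) (h : a * e ≤ 0) : |a + e| = abs (|a| - |e|) := by
  rcases lt_trichotomy a 0 with ha | ha | ha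
  · have he : 0 ≤ e := by nlinarith
    rw [abs_of_neg ha, abs_of_nonneg he]
    have : a + e = -(-a - e) := by ring
    rw [this, abs_neg]
  · simp [ha]
  · have he : e ≤ 0 := by nlinarith
    rw [abs_of_pos ha, abs_of_nonpos he]
    have : a - -e = a + e := by ring
    rw [this]

/-- monotonicity auxiliary -/
lemma s11_mono_aux {n : ℕ} {B : Set (Fin n → ℝ)} (hu : Unconditional B)
    (hc : Convex ℝ B) (x : Fin n → ℝ) (hx : x ∈ B) :
    ∀ (S : Finset (Fin n)) (z : Fin n → ℝ), (∀ j ∈ S, |z j| ≤ |x j|) →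
      (∀ j ∉ S, |z j| = |x j|) → z ∈ B := by
  intro S
  induction S using Finset.induction_on with
  | empty =>
    intro z _ h2
    have hz : z = fun i => (if x i = 0 then (1:ℝ) else z i / x i) * x i := by
      funext i
      by_cases hxi : x i = 0
      · have := h2 i (by simp)
        simp [hxi] at this ⊢
        simpa [hxi, abs_eq_zero] using this
      · simp [hxi, div_mul_cancel₀ _ hxi]
    rw [hz]
    refine hu x hx _ ?_
    intro i
    by_cases hxi : x i = 0
    · simp [hxi]
    · have h := h2 i (by simp)
      rcases abs_eq_abs.mp h with h' | h'
      · left; simp [hxi, h', div_self hxi]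
      · right; rw [if_neg hxi, h', neg_div, div_self hxi]
  | insert i S hiS ih =>
    intro z h1 h2
    by_cases hxi : x i = 0
    · refine ih z (fun j hj => h1 j (Finset.mem_insert_of_mem hj)) ?_
      intro j hj
      by_cases hji : j = i
      · subst hji
        have := h1 j (Finset.mem_insert_self _ _)
        simp [hxi] at this ⊢
        linarith [abs_nonneg (z j), this]
      · exact h2 j (by simp [hji, hj])
    · set t := z i / x i with ht
      have habs : |t| ≤ 1 := by
        rw [ht, abs_div, div_le_one (abs_pos.mpr hxi)]
        exact h1 i (Finset.mem_insert_self _ _)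
      have habs' := abs_le.mp habs
      set zp := Function.update z i (x i) with hzp
      set zm := Function.update z i (-x i) with hzm
      have hzpB : zp ∈ B := by
        refine ih zp (fun j hj => ?_) (fun j hj => ?_)
        · have hji : j ≠ i := fun h => hiS (h ▸ hj)
          rw [hzp, Function.update_of_ne hji]
          exact h1 j (Finset.mem_insert_of_mem hj)
        · by_cases hji : j = i
          · subst hji; rw [hzp, Function.update_self]
          · rw [hzp, Function.update_of_ne hji]
            exact h2 j (by simp [hji, hj])
      have hzmB : zm ∈ B := by
        refine ih zm (fun j hj => ?_) (fun j hj => ?_)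
        · have hji : j ≠ i := fun h => hiS (h ▸ hj)
          rw [hzm, Function.update_of_ne hji]
          exact h1 j (Finset.mem_insert_of_mem hj)
        · by_cases hji : j = i
          · subst hji; rw [hzm, Function.update_self, abs_neg]
          · rw [hzm, Function.update_of_ne hji]
            exact h2 j (by simp [hji, hj])
      have hmem := hc hzpB hzmB (a := (1+t)/2) (b := (1-t)/2)
        (by linarith) (by linarith) (by ring)
      have : ((1+t)/2) • zp + ((1-t)/2) • zm = z := by
        funext j
        simp only [Pi.add_apply, Pi.smul_apply, smul_eq_mul]
        by_cases hji : j = i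
        · subst hji
          rw [hzp, hzm, Function.update_self, Function.update_self]
          have : t * x j = z j := div_mul_cancel₀ _ hxi
          nlinarith [this]
        · rw [hzp, hzm, Function.update_of_ne hji, Function.update_of_ne hji]
          ring
      rwa [this] at hmem

lemma s11_mono {n : ℕ} {B : Set (Fin n → ℝ)} (hu : Unconditional B)
    (hc : Convex ℝ B) (x : Fin n → ℝ) (hx : x ∈ B) (z : Fin n → ℝ)
    (hz : ∀ j, |z j| ≤ |x j|) : z ∈ B :=
  s11_mono_aux hu hc x hx Finset.univ z (fun j _ => hz j)
    (fun j hj => absurd (Finset.mem_univ j) hj)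

/-- box lemma: strict domination by a point of B puts you in the interior -/
lemma s11_box {n : ℕ} {B : Set (Fin n → ℝ)} (hu : Unconditional B)
    (hc : Convex ℝ B) (b : Fin n → ℝ) (hb : b ∈ B) (y : Fin n → ℝ)
    (hy : ∀ j, |y j| < b j) : y ∈ interior B := by
  have hbpos : ∀ j, 0 < b j := fun j => (abs_nonneg (y j)).trans_lt (hy j)
  have hsub : Set.Icc (-b) b ⊆ B := by
    intro z hz
    rw [Set.mem_Icc] at hz
    refine s11_mono hu hc b hb z (fun j => ?_)
    rw [abs_of_pos (hbpos j)]
    rw [abs_le]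
    exact ⟨hz.1 j, hz.2 j⟩
  refine interior_mono hsub ?_
  rw [← Set.pi_univ_Icc, interior_pi_set Set.finite_univ]
  refine Set.mem_univ_pi.mpr (fun j => ?_)
  simp only [interior_Icc, Set.mem_Ioo, Pi.neg_apply]
  exact ⟨neg_lt_of_abs_lt (hy j), lt_of_abs_lt (hy j)⟩


/-- every point of a memU body has coordinates in [-1,1] -/
lemma s11_abs_le_one {n : ℕ} {B : Set (Fin n → ℝ)} (hB : memU B) :
    ∀ x ∈ B, ∀ j, |x j| ≤ 1 := by
  obtain ⟨⟨hconv, hcomp, hint⟩, hu, hfr⟩ := hB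
  intro x hx j
  by_contra hgt
  push_neg at hgt
  -- 0 is in the interior
  obtain ⟨pt, hpt⟩ := hint
  have hptB : pt ∈ B := interior_subset hpt
  have hnegpt : -pt ∈ B := by
    have := hu pt hptB (fun _ => -1) (fun i => Or.inr rfl)
    convert this using 1
    funext i; simp
  have h0 : (0 : Fin n → ℝ) ∈ interior B := by
    have := hconv.combo_interior_self_mem_interior hpt hnegpt
      (by norm_num : (0:ℝ) < 1/2) (by norm_num : (0:ℝ) ≤ 1/2) (by norm_num)
    convert this using 1
    funext i; simp
  -- the point |x j| • e_j is in B
  set z : Fin n → ℝ := fun i => if i = j then |x j| else 0 with hz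
  have hzB : z ∈ B := by
    refine s11_mono hu hconv x hx z (fun i => ?_)
    by_cases hij : i = j
    · subst hij; simp [hz]
    · simp [hz, hij]
  -- e_j in interior
  have hej : stdB j ∈ interior B := by
    have hpos : (0:ℝ) < |x j| := by linarith
    have := hconv.combo_interior_self_mem_interior h0 hzB
      (a := 1 - 1/|x j|) (b := 1/|x j|)
      (by rw [sub_pos, div_lt_one hpos]; exact hgt)
      (by positivity) (by ring)
    convert this using 1
    funext i
    simp only [Pi.add_apply, Pi.smul_apply, smul_eq_mul, Pi.zero_apply, mul_zero, zero_add]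
    by_cases hij : i = j
    · subst hij
      simp [stdB, hz, Pi.single_apply, div_mul_cancel₀, ne_of_gt hpos]
    · simp [stdB, hz, hij, Pi.single_apply]
  exact (hfr j).2 hej

/-- off s₀, some coordinate is uniformly small -/
lemma s11_small {n : ℕ} {B : Set (Fin n → ℝ)} (hB : memU B) (s₀ : Fin n)
    (hout : allOnes - stdB s₀ ∉ B) :
    ∃ δ : ℝ, 0 < δ ∧ δ < 1/2 ∧ ∀ x ∈ B, ∃ j, j ≠ s₀ ∧ |x j| < 1 - 2*δ := by
  obtain ⟨⟨hconv, hcomp, hint⟩, hu, hfr⟩ := hB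
  set K : ℕ → Set (Fin n → ℝ) :=
    fun m => B ∩ {x | ∀ j, j ≠ s₀ → 1 - 1/(m+1) ≤ |x j|} with hK
  have hclosed : ∀ m, IsClosed (K m) := by
    intro m
    refine hcomp.isClosed.inter ?_
    have : {x : Fin n → ℝ | ∀ j, j ≠ s₀ → 1 - 1/(m+1:ℝ) ≤ |x j|}
        = ⋂ j ∈ {j : Fin n | j ≠ s₀}, {x | 1 - 1/(m+1:ℝ) ≤ |x j|} := by
      ext x; simp
    rw [this]
    refine isClosed_biInter (fun j _ => ?_)
    exact isClosed_le continuous_const ((continuous_apply j).abs)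
  have hcptK : ∀ m, IsCompact (K m) := fun m => hcomp.inter_right
    (by
      have : {x : Fin n → ℝ | ∀ j, j ≠ s₀ → 1 - 1/(m+1:ℝ) ≤ |x j|}
          = ⋂ j ∈ {j : Fin n | j ≠ s₀}, {x | 1 - 1/(m+1:ℝ) ≤ |x j|} := by
        ext x; simp
      rw [this]
      exact isClosed_biInter (fun j _ => isClosed_le continuous_const ((continuous_apply j).abs)))
  have hdec : ∀ m, K (m+1) ⊆ K m := by
    intro m x hx
    refine ⟨hx.1, fun j hj => le_trans ?_ (hx.2 j hj)⟩
    have h1 : (0:ℝ) < (m:ℝ)+1 := by positivity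
    have h2 : (0:ℝ) < (m:ℝ)+1+1 := by positivity
    rw [sub_le_sub_iff_left]
    push_cast
    rw [div_le_div_iff₀ h2 h1]
    linarith
  have hiEmpty : (⋂ m, K m) = ∅ := by
    by_contra hne
    obtain ⟨x, hx⟩ := Set.nonempty_iff_ne_empty.mpr hne
    have hxB : x ∈ B := (Set.mem_iInter.mp hx 0).1
    have hone : ∀ j, j ≠ s₀ → 1 ≤ |x j| := by
      intro j hj
      have hten : Filter.Tendsto (fun m : ℕ => 1 - 1/((m:ℝ)+1)) Filter.atTop (nhds 1) := by
        have := tendsto_one_div_add_atTop_nhds_zero_nat (𝕜 := ℝ)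
        have h2 := Filter.Tendsto.const_sub (1:ℝ) this
        simpa using h2
      refine le_of_tendsto hten (Filter.Eventually.of_forall (fun m => ?_))
      exact (Set.mem_iInter.mp hx m).2 j hj
    refine hout (s11_mono hu hconv x hxB _ (fun j => ?_))
    by_cases hj : j = s₀
    · subst hj
      have h0 : (allOnes - stdB j : Fin n → ℝ) j = 0 := by
        simp [allOnes, stdB, Pi.single_apply]
      rw [h0]
      simpa using abs_nonneg (x j)
    · have h1 : (allOnes - stdB s₀ : Fin n → ℝ) j = 1 := by
        simp [allOnes, stdB, Pi.single_apply, hj]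
      rw [h1]
      simpa using hone j hj
  have hex : ∃ m, K m = ∅ := by
    by_contra hne
    push_neg at hne
    have := IsCompact.nonempty_iInter_of_sequence_nonempty_isCompact_isClosed K hdec
      hne (hcptK 0) hclosed
    rw [hiEmpty] at this
    exact Set.not_nonempty_empty this
  obtain ⟨m, hm⟩ := hex
  refine ⟨1/(4*(m+1)), by positivity, ?_, ?_⟩
  · have hm0 : (0:ℝ) ≤ m := Nat.cast_nonneg m
    rw [div_lt_div_iff₀ (by positivity) (by norm_num : (0:ℝ) < 2)]
    nlinarith
  · intro x hxB
    have hxK : x ∉ K m := by rw [hm]; exact Set.notMem_empty x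
    rw [hK] at hxK
    simp only [Set.mem_inter_iff, Set.mem_setOf_eq, not_and, not_forall] at hxK
    obtain ⟨j, hj, hlt⟩ := hxK hxB
    push_neg at hlt
    refine ⟨j, hj, lt_of_lt_of_le hlt ?_⟩
    have h1 : (0:ℝ) < (m:ℝ)+1 := by positivity
    rw [sub_le_sub_iff_left]
    rw [show (2:ℝ) * (1/(4*((m:ℝ)+1))) = 1/(2*((m:ℝ)+1)) by field_simp; ring]
    rw [div_le_div_iff₀ (by positivity) h1]
    linarith


/-- Lemma A: illumination with an opposing special index -/
lemma s11_lemA {n : ℕ} {B : Set (Fin n → ℝ)} (hconv : Convex ℝ B)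
    (hu : Unconditional B) (x d : Fin n → ℝ) (hxB : x ∈ B)
    (hx1 : ∀ j, |x j| ≤ 1) (δ : ℝ) (hδ0 : 0 < δ) (hδ2 : δ < 1/2)
    (i : Fin n) (hvB : (allOnes - stdB i : Fin n → ℝ) ∈ B)
    (hxi : x i ≠ 0) (hdi : |d i| = 1) (hdix : d i * x i < 0)
    (hdj : ∀ j, j ≠ i → |d j| = δ ∧ (d j * x j ≤ 0 ∨ |x j| < 1 - 2*δ)) :
    ∃ ε : ℝ, 0 < ε ∧ x + ε • d ∈ interior B := by
  set ε : ℝ := |x i| with hε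
  have hεpos : 0 < ε := abs_pos.mpr hxi
  have hε1 : ε ≤ 1 := hx1 i
  set b : Fin n → ℝ := fun j => (|x j| + (if j = i then 0 else 1))/2 with hb
  have hbB : b ∈ B := by
    have hzabs : (fun j => |x j|) ∈ B :=
      s11_mono hu hconv x hxB _ (fun j => by simp)
    have := hconv hzabs hvB (by norm_num : (0:ℝ) ≤ 1/2)
      (by norm_num : (0:ℝ) ≤ 1/2) (by norm_num)
    convert this using 1
    funext j
    simp only [Pi.add_apply, Pi.smul_apply, smul_eq_mul, Pi.sub_apply]
    have : (allOnes - stdB i : Fin n → ℝ) j = if j = i then 0 else 1 := by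
      by_cases hji : j = i <;> simp [allOnes, stdB, Pi.single_apply, hji]
    rw [show allOnes j - stdB i j = (allOnes - stdB i : Fin n → ℝ) j from rfl, this]
    ring
  refine ⟨ε, hεpos, s11_box hu hconv b hbB _ (fun j => ?_)⟩
  have happ : (x + ε • d) j = x j + ε * d j := by simp
  rw [happ]
  by_cases hji : j = i
  · subst hji
    have hy : x j + ε * d j = 0 := by
      rcases (abs_eq (by norm_num : (0:ℝ) ≤ 1)).mp hdi with hd1 | hd1
      · have hxneg : x j < 0 := by nlinarith
        rw [hε, hd1, abs_of_neg hxneg]; ring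
      · have hxpos : 0 < x j := by nlinarith
        rw [hε, hd1, abs_of_pos hxpos]; ring
    rw [hy, abs_zero]
    have hbj : b j = |x j|/2 := by simp [hb]
    rw [hbj]
    have := abs_pos.mpr hxi
    linarith
  · obtain ⟨hdjabs, hsign⟩ := hdj j hji
    have hbj : b j = (|x j| + 1)/2 := by simp [hb, hji]
    have hεδ : ε * δ < 1/2 := by nlinarith
    rcases hsign with hopp | hsmall
    · -- opposing
      have hmul : x j * (ε * d j) ≤ 0 := by
        have : x j * (ε * d j) = ε * (d j * x j) := by ring
        rw [this]
        exact mul_nonpos_of_nonneg_of_nonpos (le_of_lt hεpos) hopp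
      rw [s11_abs_add _ _ hmul, hbj]
      have habs : |ε * d j| = ε * δ := by
        rw [abs_mul, abs_of_pos hεpos, hdjabs]
      rw [habs, abs_lt]
      constructor
      · have : (0:ℝ) < ε * δ := by positivity
        nlinarith [abs_nonneg (x j)]
      · nlinarith [hx1 j, abs_nonneg (x j)]
    · -- wrong sign but small
      have : |x j + ε * d j| ≤ |x j| + ε * δ := by
        calc |x j + ε * d j| ≤ |x j| + |ε * d j| := abs_add_le _ _
        _ = |x j| + ε * δ := by rw [abs_mul, abs_of_pos hεpos, hdjabs]
      rw [hbj]
      have : ε * δ ≤ δ := by nlinarith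
      nlinarith [abs_nonneg (x j), hx1 j, this, abs_add_le (x j) (ε * d j),
        abs_mul ε (d j), abs_of_pos hεpos]


/-- Lemma B: illumination with a spread budget -/
lemma s11_lemB {n : ℕ} {B : Set (Fin n → ℝ)} (hconv : Convex ℝ B)
    (hu : Unconditional B) (x d : Fin n → ℝ) (hxB : x ∈ B)
    (hx1 : ∀ j, |x j| ≤ 1) (ν : Fin n → ℝ) (hν0 : ∀ j, 0 ≤ ν j)
    (hν1 : ∀ j, ν j < 1) (hνsum : ∑ j, ν j = 1)
    (hνB : ∀ j, ν j ≠ 0 → (allOnes - stdB j : Fin n → ℝ) ∈ B)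
    (hνx : ∀ j, ν j + |x j| ≤ 1)
    (hsign : ∀ j, d j * x j ≤ 0 ∨ ν j + |x j| < 1)
    (hd : ∀ j, 0 < |d j| ∧ |d j| ≤ 1) (j₀ : Fin n) :
    ∃ ε : ℝ, 0 < ε ∧ x + ε • d ∈ interior B := by
  classical
  set b : Fin n → ℝ := fun j => (|x j| + (1 - ν j))/2 with hb
  have hbx : ∀ j, |x j| ≤ b j := by
    intro j
    have := hνx j
    simp only [hb]
    linarith
  have hbB : b ∈ B := by
    have hzabs : (fun j => |x j|) ∈ B :=
      s11_mono hu hconv x hxB _ (fun j => by simp)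
    have hqB : (fun j => 1 - ν j) ∈ B := by
      have hsum2 : ∑ j ∈ Finset.univ.filter (fun j => ν j ≠ 0), ν j = 1 := by
        rw [Finset.sum_filter_ne_zero]; exact hνsum
      have := hconv.sum_mem (fun j (_ : j ∈ Finset.univ.filter (fun j => ν j ≠ 0)) => hν0 j) hsum2
        (fun j hj => hνB j (Finset.mem_filter.mp hj).2)
      convert this using 1
      funext k
      rw [Finset.sum_apply]
      have hterm : ∀ j ∈ Finset.univ.filter (fun j => ν j ≠ 0),
          (ν j • (allOnes - stdB j : Fin n → ℝ)) k
            = ν j - (if k = j then ν j else 0) := by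
        intro j _
        simp only [Pi.smul_apply, Pi.sub_apply, smul_eq_mul]
        have : (allOnes - stdB j : Fin n → ℝ) k = 1 - (if k = j then 1 else 0) := by
          simp [allOnes, stdB, Pi.single_apply]
        rw [show allOnes k - stdB j k = (allOnes - stdB j : Fin n → ℝ) k from rfl, this]
        by_cases hkj : k = j <;> simp [hkj] <;> ring
      rw [Finset.sum_congr rfl hterm, Finset.sum_sub_distrib, hsum2]
      have hite : ∑ j ∈ Finset.univ.filter (fun j => ν j ≠ 0), (if k = j then ν j else 0)
          = ν k := by
        rw [Finset.sum_ite_eq]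
        by_cases hk : k ∈ Finset.univ.filter (fun j => ν j ≠ 0)
        · rw [if_pos hk]
        · rw [if_neg hk]
          by_contra hne
          exact hk (Finset.mem_filter.mpr ⟨Finset.mem_univ k, fun h => hne h.symm⟩)
      rw [hite]
    have := hconv hzabs hqB (by norm_num : (0:ℝ) ≤ 1/2)
      (by norm_num : (0:ℝ) ≤ 1/2) (by norm_num)
    convert this using 1
    funext j
    simp only [Pi.add_apply, Pi.smul_apply, smul_eq_mul, hb]
    ring
  -- choose epsilon
  set g : Fin n → ℝ := fun j => if d j * x j ≤ 0 then b j else b j - |x j| with hg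
  have hgpos : ∀ j, 0 < g j := by
    intro j
    simp only [hg]
    by_cases hj : d j * x j ≤ 0
    · rw [if_pos hj]
      have h1 := hν1 j
      have h2 := abs_nonneg (x j)
      simp only [hb]; linarith
    · rw [if_neg hj]
      rcases hsign j with h | h
      · exact absurd h hj
      · simp only [hb]; linarith
  have huniv : (Finset.univ : Finset (Fin n)).Nonempty := ⟨j₀, Finset.mem_univ j₀⟩
  set ε : ℝ := (Finset.univ.inf' huniv g)/2 with hε
  have hinfpos : 0 < Finset.univ.inf' huniv g := by
    rw [Finset.lt_inf'_iff]
    exact fun j _ => hgpos j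
  have hεpos : 0 < ε := by simp only [hε]; linarith
  have hεlt : ∀ j, ε < g j := by
    intro j
    have h1 : Finset.univ.inf' huniv g ≤ g j := Finset.inf'_le _ (Finset.mem_univ j)
    simp only [hε]; linarith
  refine ⟨ε, hεpos, s11_box hu hconv b hbB _ (fun j => ?_)⟩
  have happ : (x + ε • d) j = x j + ε * d j := by simp
  rw [happ]
  have hdabs : |ε * d j| = ε * |d j| := by rw [abs_mul, abs_of_pos hεpos]
  have hεd : ε * |d j| ≤ ε := by nlinarith [(hd j).2]
  by_cases hj : d j * x j ≤ 0
  · have hmul : x j * (ε * d j) ≤ 0 := by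
      have : x j * (ε * d j) = ε * (d j * x j) := by ring
      rw [this]
      exact mul_nonpos_of_nonneg_of_nonpos (le_of_lt hεpos) hj
    rw [s11_abs_add _ _ hmul, hdabs, abs_lt]
    have hgj : g j = b j := by simp only [hg, if_pos hj]
    have h2 := hεlt j
    rw [hgj] at h2
    have h3 : 0 < ε * |d j| := mul_pos hεpos (hd j).1
    constructor
    · linarith [abs_nonneg (x j), hεd, h2]
    · linarith [hbx j, h3]
  · have hgj : g j = b j - |x j| := by simp only [hg, if_neg hj]
    have h2 := hεlt j
    rw [hgj] at h2
    calc |x j + ε * d j| ≤ |x j| + |ε * d j| := abs_add_le _ _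
    _ = |x j| + ε * |d j| := by rw [hdabs]
    _ ≤ |x j| + ε := by linarith
    _ < b j := by linarith


section fidx
variable {n : ℕ} (s₀ p q : Fin n)

/-- special index selector -/
def s11f (σ : Fin n → Bool) : Fin n :=
  if ∀ j, j ≠ s₀ → j ≠ p → σ j = σ q then q
  else if σ p = σ q then p
  else if h : (Finset.univ.filter (fun j => j ≠ s₀ ∧ j ≠ p ∧ σ j ≠ σ q)).Nonempty
       then (Finset.univ.filter (fun j => j ≠ s₀ ∧ j ≠ p ∧ σ j ≠ σ q)).min' h
       else q

lemma s11f_ne_s0 (hp : p ≠ s₀) (hq : q ≠ s₀) (σ : Fin n → Bool) :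
    s11f s₀ p q σ ≠ s₀ := by
  unfold s11f
  split_ifs with h1 h2 h3
  · exact hq
  · exact hp
  · have := Finset.min'_mem _ h3
    exact (Finset.mem_filter.mp this).2.1
  · exact hq

lemma s11f_eq_q (σ : Fin n → Bool) (h1 : ∀ j, j ≠ s₀ → j ≠ p → σ j = σ q) :
    s11f s₀ p q σ = q := by
  unfold s11f; rw [if_pos h1]

lemma s11f_eq_p (σ : Fin n → Bool) (h1 : ¬ ∀ j, j ≠ s₀ → j ≠ p → σ j = σ q)
    (h2 : σ p = σ q) : s11f s₀ p q σ = p := by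
  unfold s11f; rw [if_neg h1, if_pos h2]

lemma s11f_spec3 (σ : Fin n → Bool) (h1 : ¬ ∀ j, j ≠ s₀ → j ≠ p → σ j = σ q)
    (h2 : σ p ≠ σ q) :
    s11f s₀ p q σ ≠ s₀ ∧ s11f s₀ p q σ ≠ p ∧ σ (s11f s₀ p q σ) ≠ σ q := by
  have hne : (Finset.univ.filter (fun j => j ≠ s₀ ∧ j ≠ p ∧ σ j ≠ σ q)).Nonempty := by
    push_neg at h1
    obtain ⟨j, hj1, hj2, hj3⟩ := h1
    exact ⟨j, Finset.mem_filter.mpr ⟨Finset.mem_univ j, hj1, hj2, hj3⟩⟩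
  unfold s11f
  rw [if_neg h1, if_neg h2, dif_pos hne]
  exact (Finset.mem_filter.mp (Finset.min'_mem _ hne)).2

lemma s11f_neg (σ : Fin n → Bool) : s11f s₀ p q (fun j => !σ j) = s11f s₀ p q σ := by
  have key : ∀ a b : Bool, ((!a) = (!b)) ↔ (a = b) := by decide
  have key' : ∀ a b : Bool, ((!a) ≠ (!b)) ↔ (a ≠ b) := by decide
  have hset : (Finset.univ.filter (fun j => j ≠ s₀ ∧ j ≠ p ∧ (!σ j) ≠ (!σ q)))
      = Finset.univ.filter (fun j => j ≠ s₀ ∧ j ≠ p ∧ σ j ≠ σ q) := by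
    ext j; simp only [Finset.mem_filter, key']
  unfold s11f
  by_cases h1 : ∀ j, j ≠ s₀ → j ≠ p → σ j = σ q
  · rw [if_pos h1, if_pos (fun j hj hjp => (key _ _).mpr (h1 j hj hjp))]
  · rw [if_neg h1, if_neg (fun h => h1 (fun j hj hjp => (key _ _).mp (h j hj hjp)))]
    by_cases h2 : σ p = σ q
    · rw [if_pos h2, if_pos ((key _ _).mpr h2)]
    · rw [if_neg h2, if_neg (fun h => h2 ((key _ _).mp h))]
      simp only [hset]

/-- all possible outputs -/
lemma s11f_cases (σ : Fin n → Bool) :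
    s11f s₀ p q σ = q ∨ s11f s₀ p q σ = p ∨ σ (s11f s₀ p q σ) ≠ σ q := by
  unfold s11f
  split_ifs with h1 h2 h3
  · exact Or.inl rfl
  · exact Or.inr (Or.inl rfl)
  · exact Or.inr (Or.inr (Finset.mem_filter.mp (Finset.min'_mem _ h3)).2.2.2)
  · exact Or.inl rfl

/-- P1: the selector avoids a lone deviation -/
lemma s11f_P1 (hp : p ≠ s₀) (hq : q ≠ s₀) (hpq : p ≠ q)
    (hw : ∀ a b : Fin n, ∃ w, w ≠ s₀ ∧ w ≠ a ∧ w ≠ b)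
    (σ : Fin n → Bool) (z : Fin n) (hz : z ≠ s₀) (c : Bool)
    (hconst : ∀ j, j ≠ s₀ → j ≠ z → σ j = c) (hdev : σ z = !c) :
    s11f s₀ p q σ ≠ z := by
  by_cases hzp : z = p
  · have h1 : ∀ j, j ≠ s₀ → j ≠ p → σ j = σ q := by
      intro j hj hjp
      rw [hconst j hj (fun hh => hjp (hh.trans hzp)),
        hconst q hq (fun hh => hpq ((hh.trans hzp)).symm)]
    have heq := s11f_eq_q s₀ p q σ h1
    intro h
    rw [heq] at h
    exact hpq (h.trans hzp).symm
  · by_cases hzq : z = q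
    · obtain ⟨w, hws, hwp, hwz⟩ := hw p z
      have h1 : ¬ ∀ j, j ≠ s₀ → j ≠ p → σ j = σ q := by
        intro hall
        have h := hall w hws hwp
        rw [hconst w hws hwz, ← hzq, hdev] at h
        cases c <;> exact absurd h (by decide)
      have h2 : σ p ≠ σ q := by
        rw [hconst p hp (fun hh => hzp hh.symm), ← hzq, hdev]
        cases c <;> decide
      have h3 := (s11f_spec3 s₀ p q σ h1 h2).2.2
      intro h
      rw [h, hzq] at h3
      exact h3 rfl
    · have h1 : ¬ ∀ j, j ≠ s₀ → j ≠ p → σ j = σ q := by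
        intro hall
        have h := hall z hz (fun h => hzp h)
        rw [hdev, hconst q hq (fun h => hzq h.symm)] at h
        cases c <;> exact absurd h (by decide)
      have h2 : σ p = σ q := by
        rw [hconst p hp (fun h => hzp h.symm), hconst q hq (fun h => hzq h.symm)]
      rw [s11f_eq_p _ _ _ σ h1 h2]
      exact fun h => hzp h.symm

/-- P2: some extension avoids z -/
lemma s11f_P2 (hp : p ≠ s₀) (hq : q ≠ s₀) (hpq : p ≠ q)
    (hw : ∀ a b : Fin n, ∃ w, w ≠ s₀ ∧ w ≠ a ∧ w ≠ b)
    (σ : Fin n → Bool) (z : Fin n) (hz : z ≠ s₀)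
    (hnc : ∃ j k, j ≠ s₀ ∧ j ≠ z ∧ k ≠ s₀ ∧ k ≠ z ∧ σ j ≠ σ k) :
    ∃ v : Bool, s11f s₀ p q (Function.update σ z v) ≠ z := by
  obtain ⟨j, k, hjs, hjz, hks, hkz, hjk⟩ := hnc
  by_cases hzp : z = p
  · refine ⟨!(σ q), ?_⟩
    set σ' := Function.update σ z (!(σ q)) with hσ'
    have hσ'q : σ' q = σ q :=
      Function.update_of_ne (fun hh => hpq ((hh.trans hzp)).symm) _ _
    have hj' : σ' j = σ j := Function.update_of_ne hjz _ _
    have hk' : σ' k = σ k := Function.update_of_ne hkz _ _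
    have hz' : σ' z = !(σ q) := Function.update_self _ _ _
    have h1 : ¬ ∀ j', j' ≠ s₀ → j' ≠ p → σ' j' = σ' q := by
      intro hall
      have h1' := hall j hjs (fun hh => hjz (hh.trans hzp.symm))
      have h2' := hall k hks (fun hh => hkz (hh.trans hzp.symm))
      rw [hj'] at h1'
      rw [hk'] at h2'
      exact hjk (h1'.trans h2'.symm)
    have h2 : σ' p ≠ σ' q := by
      rw [hσ'q, ← hzp, hz']
      exact Bool.not_ne_self (σ q)
    intro h
    exact (s11f_spec3 s₀ p q σ' h1 h2).2.1 (h.trans hzp)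
  · by_cases hzq : z = q
    · by_cases hcc : ∃ a b : Fin n, (a ≠ s₀ ∧ a ≠ p ∧ a ≠ z) ∧ (b ≠ s₀ ∧ b ≠ p ∧ b ≠ z)
          ∧ σ a ≠ σ b
      · refine ⟨true, ?_⟩
        set σ' := Function.update σ z true with hσ'
        obtain ⟨a, b, ⟨has, hap, haz⟩, ⟨hbs, hbp, hbz⟩, hab⟩ := hcc
        have ha' : σ' a = σ a := Function.update_of_ne haz _ _
        have hb' : σ' b = σ b := Function.update_of_ne hbz _ _
        have h1 : ¬ ∀ j', j' ≠ s₀ → j' ≠ p → σ' j' = σ' q := by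
          intro hall
          have h1' := hall a has hap
          have h2' := hall b hbs hbp
          rw [ha'] at h1'
          rw [hb'] at h2'
          exact hab (h1'.trans h2'.symm)
        by_cases h2 : σ' p = σ' q
        · have heq := s11f_eq_p s₀ p q σ' h1 h2
          intro h
          rw [heq] at h
          exact hzp h.symm
        · intro h
          have h3 := (s11f_spec3 s₀ p q σ' h1 h2).2.2
          rw [h, hzq] at h3
          exact h3 rfl
      · -- σ constant on coordinates off s₀, p, z
        obtain ⟨w, hws, hwp, hwz⟩ := hw p z
        push_neg at hcc
        have hconst : ∀ a, a ≠ s₀ → a ≠ p → a ≠ z → σ a = σ w := by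
          intro a has hap haz
          exact hcc a w ⟨has, hap, haz⟩ ⟨hws, hwp, hwz⟩
        have hσp : σ p ≠ σ w := by
          intro heq
          have hval : ∀ a, a ≠ s₀ → a ≠ z → σ a = σ w := by
            intro a has haz
            by_cases hap : a = p
            · rw [hap]; exact heq
            · exact hconst a has hap haz
          exact hjk ((hval j hjs hjz).trans (hval k hks hkz).symm)
        have hσp' : σ p = !(σ w) := by
          cases h1 : σ p <;> cases h2 : σ w <;> simp_all
        refine ⟨!(σ w), ?_⟩
        set σ' := Function.update σ z (!(σ w)) with hσ'
        have hw' : σ' w = σ w := Function.update_of_ne hwz _ _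
        have hz' : σ' z = !(σ w) := Function.update_self _ _ _
        have hp2 : σ' p = σ p := Function.update_of_ne (fun hh => hzp hh.symm) _ _
        have h1 : ¬ ∀ j', j' ≠ s₀ → j' ≠ p → σ' j' = σ' q := by
          intro hall
          have h := hall w hws hwp
          rw [hw', ← hzq, hz'] at h
          exact (Bool.not_ne_self (σ w)).symm h
        have h2 : σ' p = σ' q := by
          rw [hp2, ← hzq, hz']
          exact hσp'
        have heq := s11f_eq_p s₀ p q σ' h1 h2
        intro h
        rw [heq] at h
        exact hzp h.symm
    · -- z ∉ {p, q}
      refine ⟨σ q, ?_⟩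
      set σ' := Function.update σ z (σ q) with hσ'
      have hσ'q : σ' q = σ q := Function.update_of_ne (fun h => hzq h.symm) _ _
      have hz2 : σ' z = σ q := Function.update_self _ _ _
      have hσ'z : σ' z = σ' q := hz2.trans hσ'q.symm
      rcases s11f_cases s₀ p q σ' with h | h | h
      · rw [h]; exact fun hh => hzq hh.symm
      · rw [h]; exact fun hh => hzp hh.symm
      · intro hh
        rw [hh, hσ'z] at h
        exact h rfl

end fidx


/-- the direction vector attached to a sign pattern -/
def s11d {n : ℕ} (s₀ p q : Fin n) (δ : ℝ) (σ : Fin n → Bool) : Fin n → ℝ :=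
  fun j => (if j = s11f s₀ p q σ then 1 else δ) * s11sv (σ j)

lemma s11d_abs {n : ℕ} (s₀ p q : Fin n) (δ : ℝ) (hδ0 : 0 < δ) (σ : Fin n → Bool)
    (j : Fin n) : |s11d s₀ p q δ σ j| = if j = s11f s₀ p q σ then 1 else δ := by
  unfold s11d
  rw [abs_mul, s11sv_abs, mul_one]
  split_ifs
  · exact abs_one
  · exact abs_of_pos hδ0

lemma s11d_neg {n : ℕ} (s₀ p q : Fin n) (δ : ℝ) (σ : Fin n → Bool) :
    s11d s₀ p q δ (fun j => !σ j) = -(s11d s₀ p q δ σ) := by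
  funext j
  simp only [s11d, Pi.neg_apply, s11f_neg, s11sv_neg]
  ring

/-- the covering lemma: every point of B is illuminated by an admissible pattern -/
lemma s11_cover {n : ℕ} {B : Set (Fin n → ℝ)} (hB : memU B)
    (s₀ p q : Fin n) (hp : p ≠ s₀) (hq : q ≠ s₀) (hpq : p ≠ q)
    (hw : ∀ a b : Fin n, ∃ w, w ≠ s₀ ∧ w ≠ a ∧ w ≠ b)
    (hin : ∀ i : Fin n, i ≠ s₀ → allOnes - stdB i ∈ B)
    (δ : ℝ) (hδ0 : 0 < δ) (hδ2 : δ < 1/2)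
    (hsmall : ∀ x ∈ B, ∃ j, j ≠ s₀ ∧ |x j| < 1 - 2*δ)
    (x : Fin n → ℝ) (hxB : x ∈ B) :
    ∃ σ : Fin n → Bool, (∃ j k, j ≠ s₀ ∧ k ≠ s₀ ∧ σ j ≠ σ k) ∧
      ∃ ε : ℝ, 0 < ε ∧ x + ε • (s11d s₀ p q δ σ) ∈ interior B := by
  obtain ⟨⟨hconv, hcomp, hint⟩, hu, hfr⟩ := hB
  have hx1 : ∀ j, |x j| ≤ 1 := s11_abs_le_one ⟨⟨hconv, hcomp, hint⟩, hu, hfr⟩ x hxB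
  set τ : Fin n → Bool := fun j => decide (x j ≤ 0) with hτ
  have hoppw : ∀ j, s11sv (τ j) * x j ≤ 0 := by
    intro j
    by_cases h : x j ≤ 0
    · have ht : τ j = true := decide_eq_true h
      rw [ht]; simp [s11sv]; linarith
    · have ht : τ j = false := decide_eq_false h
      push_neg at h
      rw [ht]; simp [s11sv]; linarith
  have hopps : ∀ j, x j ≠ 0 → s11sv (τ j) * x j < 0 := by
    intro j hj
    by_cases h : x j ≤ 0
    · have ht : τ j = true := decide_eq_true h
      rw [ht]; simp [s11sv]
      cases lt_or_eq_of_le h with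
      | inl h' => exact h'
      | inr h' => exact absurd h' hj
    · have ht : τ j = false := decide_eq_false h
      push_neg at h
      rw [ht]; simp [s11sv]; linarith
  have hdsign : ∀ (σ : Fin n → Bool) (j : Fin n), σ j = τ j →
      s11d s₀ p q δ σ j * x j ≤ 0 := by
    intro σ j hσ
    have h1 : s11d s₀ p q δ σ j * x j
        = (if j = s11f s₀ p q σ then 1 else δ) * (s11sv (σ j) * x j) := by
      unfold s11d; ring
    rw [h1, hσ]
    apply mul_nonpos_of_nonneg_of_nonpos _ (hoppw j)
    split_ifs
    · norm_num
    · linarith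
  -- applier for Lemma A
  have happlyA : ∀ σ : Fin n → Bool,
      x (s11f s₀ p q σ) ≠ 0 →
      σ (s11f s₀ p q σ) = τ (s11f s₀ p q σ) →
      (∀ j, j ≠ s11f s₀ p q σ → (σ j = τ j ∨ x j = 0 ∨ |x j| < 1 - 2*δ)) →
      ∃ ε : ℝ, 0 < ε ∧ x + ε • (s11d s₀ p q δ σ) ∈ interior B := by
    intro σ hxi hσi hrest
    refine s11_lemA hconv hu x _ hxB hx1 δ hδ0 hδ2 (s11f s₀ p q σ)
      (hin _ (s11f_ne_s0 _ _ _ hp hq σ)) hxi ?_ ?_ ?_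
    · rw [s11d_abs _ _ _ _ hδ0, if_pos rfl]
    · have h1 : s11d s₀ p q δ σ (s11f s₀ p q σ)
          = s11sv (σ (s11f s₀ p q σ)) := by
        unfold s11d; rw [if_pos rfl, one_mul]
      rw [h1, hσi]
      exact hopps _ hxi
    · intro j hj
      constructor
      · rw [s11d_abs _ _ _ _ hδ0, if_neg hj]
      · rcases hrest j hj with h | h | h
        · exact Or.inl (hdsign σ j h)
        · exact Or.inl (by rw [h, mul_zero])
        · exact Or.inr h
  set β : ℝ := ∑ j, (if j = s₀ then 0 else 1 - |x j|) with hβdef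
  -- applier for Lemma B
  have happlyB : ∀ σ : Fin n → Bool, 1 < β →
      (∀ j, σ j = τ j ∨ (j ≠ s₀ ∧ |x j| < 1)) →
      ∃ ε : ℝ, 0 < ε ∧ x + ε • (s11d s₀ p q δ σ) ∈ interior B := by
    intro σ hβ hcond
    have hβ0 : (0:ℝ) < β := by linarith
    refine s11_lemB hconv hu x _ hxB hx1
      (fun j => (if j = s₀ then 0 else 1 - |x j|)/β) ?_ ?_ ?_ ?_ ?_ ?_ ?_ s₀
    · intro j
      apply div_nonneg _ (le_of_lt hβ0)
      split_ifs with h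
      · exact le_refl 0
      · linarith [hx1 j]
    · intro j
      rw [div_lt_one hβ0]
      split_ifs with h
      · linarith
      · linarith [abs_nonneg (x j)]
    · rw [← Finset.sum_div, ← hβdef, div_self (ne_of_gt hβ0)]
    · intro j hj
      refine hin j (fun hh => hj ?_)
      rw [if_pos hh, zero_div]
    · intro j
      split_ifs with h
      · rw [zero_div]; linarith [hx1 j]
      · have h1 : (1 - |x j|)/β ≤ 1 - |x j| :=
          div_le_self (by linarith [hx1 j]) (by linarith)
        linarith
    · intro j
      rcases hcond j with h | ⟨hjs, hjx⟩
      · exact Or.inl (hdsign σ j h)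
      · refine Or.inr ?_
        rw [if_neg hjs]
        have h1 : (1 - |x j|)/β < 1 - |x j| :=
          div_lt_self (by linarith) hβ
        linarith
    · intro j
      rw [s11d_abs _ _ _ _ hδ0]
      split_ifs
      · norm_num
      · exact ⟨hδ0, by linarith⟩
  by_cases hβ : 1 < β
  · by_cases hcon : ∀ j k, j ≠ s₀ → k ≠ s₀ → τ j = τ k
    · obtain ⟨z₀, hz₀s, hz₀small⟩ := hsmall x hxB
      obtain ⟨w, hws, hwz₀, -⟩ := hw z₀ z₀
      set σ := Function.update τ z₀ (!(τ z₀)) with hσdef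
      have hσz : σ z₀ = !(τ z₀) := Function.update_self _ _ _
      have hσj : ∀ j, j ≠ z₀ → σ j = τ j := fun j hj => Function.update_of_ne hj _ _
      refine ⟨σ, ⟨z₀, w, hz₀s, hws, ?_⟩, ?_⟩
      · rw [hσz, hσj w hwz₀, hcon w z₀ hws hz₀s]
        exact Bool.not_ne_self (τ z₀)
      · refine happlyB σ hβ (fun j => ?_)
        by_cases hj : j = z₀
        · subst hj
          exact Or.inr ⟨hz₀s, by linarith⟩
        · exact Or.inl (hσj j hj)
    · push_neg at hcon
      obtain ⟨a, b, has, hbs, hab⟩ := hcon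
      exact ⟨τ, ⟨a, b, has, hbs, hab⟩, happlyB τ hβ (fun j => Or.inl rfl)⟩
  · push_neg at hβ
    by_cases hzero : ∃ z, z ≠ s₀ ∧ x z = 0
    · obtain ⟨z, hzs, hxz⟩ := hzero
      have hone : ∀ j, j ≠ s₀ → j ≠ z → |x j| = 1 := by
        intro j hjs hjz
        have hzj : z ≠ j := fun h => hjz h.symm
        have hpair : ∑ l ∈ ({z, j} : Finset (Fin n)),
            (if l = s₀ then (0:ℝ) else 1 - |x l|) ≤ β := by
          refine Finset.sum_le_sum_of_subset_of_nonneg (Finset.subset_univ _)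
            (fun l _ _ => ?_)
          split_ifs with h
          · exact le_refl 0
          · linarith [hx1 l]
        rw [Finset.sum_pair hzj, if_neg hzs, if_neg hjs, hxz, abs_zero] at hpair
        have := hx1 j
        linarith
      by_cases hρ : ∃ a b : Fin n, a ≠ s₀ ∧ a ≠ z ∧ b ≠ s₀ ∧ b ≠ z ∧ τ a ≠ τ b
      · obtain ⟨v, hv⟩ := s11f_P2 s₀ p q hp hq hpq hw τ z hzs hρ
        set σ := Function.update τ z v with hσdef
        have hσj : ∀ j, j ≠ z → σ j = τ j := fun j hj => Function.update_of_ne hj _ _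
        obtain ⟨a, b, has, haz, hbs, hbz, hab⟩ := hρ
        have his : s11f s₀ p q σ ≠ s₀ := s11f_ne_s0 _ _ _ hp hq σ
        have hxi : x (s11f s₀ p q σ) ≠ 0 := by
          have h1 := hone _ his hv
          intro h0
          rw [h0, abs_zero] at h1
          norm_num at h1
        refine ⟨σ, ⟨a, b, has, hbs, by rw [hσj a haz, hσj b hbz]; exact hab⟩, ?_⟩
        refine happlyA σ hxi (hσj _ hv) (fun j hj => ?_)
        by_cases hjz : j = z
        · subst hjz; exact Or.inr (Or.inl hxz)
        · exact Or.inl (hσj j hjz)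
      · push_neg at hρ
        obtain ⟨w, hws, hwz, -⟩ := hw z z
        set σ := Function.update τ z (!(τ w)) with hσdef
        have hσj : ∀ j, j ≠ z → σ j = τ j := fun j hj => Function.update_of_ne hj _ _
        have hσz : σ z = !(τ w) := Function.update_self _ _ _
        have hconstσ : ∀ j, j ≠ s₀ → j ≠ z → σ j = τ w := by
          intro j hjs hjz
          rw [hσj j hjz]
          exact hρ j w hjs hjz hws hwz
        have hv := s11f_P1 s₀ p q hp hq hpq hw σ z hzs (τ w) hconstσ hσz
        have his : s11f s₀ p q σ ≠ s₀ := s11f_ne_s0 _ _ _ hp hq σ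
        have hxi : x (s11f s₀ p q σ) ≠ 0 := by
          have h1 := hone _ his hv
          intro h0
          rw [h0, abs_zero] at h1
          norm_num at h1
        refine ⟨σ, ⟨z, w, hzs, hws, by rw [hσz, hσj w hwz]; exact Bool.not_ne_self (τ w)⟩, ?_⟩
        refine happlyA σ hxi (hσj _ hv) (fun j hj => ?_)
        by_cases hjz : j = z
        · subst hjz; exact Or.inr (Or.inl hxz)
        · exact Or.inl (hσj j hjz)
    · push_neg at hzero
      by_cases hcon : ∀ j k, j ≠ s₀ → k ≠ s₀ → τ j = τ k
      · obtain ⟨z₀, hz₀s, hz₀small⟩ := hsmall x hxB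
        obtain ⟨w, hws, hwz₀, -⟩ := hw z₀ z₀
        set σ := Function.update τ z₀ (!(τ z₀)) with hσdef
        have hσz : σ z₀ = !(τ z₀) := Function.update_self _ _ _
        have hσj : ∀ j, j ≠ z₀ → σ j = τ j := fun j hj => Function.update_of_ne hj _ _
        have hconstσ : ∀ j, j ≠ s₀ → j ≠ z₀ → σ j = τ z₀ := by
          intro j hjs hjz
          rw [hσj j hjz]
          exact hcon j z₀ hjs hz₀s
        have hv := s11f_P1 s₀ p q hp hq hpq hw σ z₀ hz₀s (τ z₀) hconstσ hσz
        have his : s11f s₀ p q σ ≠ s₀ := s11f_ne_s0 _ _ _ hp hq σ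
        refine ⟨σ, ⟨z₀, w, hz₀s, hws, by
          rw [hσz, hσj w hwz₀, hcon w z₀ hws hz₀s]
          exact Bool.not_ne_self (τ z₀)⟩, ?_⟩
        refine happlyA σ (hzero _ his) (hσj _ hv) (fun j hj => ?_)
        by_cases hjz : j = z₀
        · subst hjz; exact Or.inr (Or.inr hz₀small)
        · exact Or.inl (hσj j hjz)
      · push_neg at hcon
        obtain ⟨a, b, has, hbs, hab⟩ := hcon
        have his : s11f s₀ p q τ ≠ s₀ := s11f_ne_s0 _ _ _ hp hq τ
        exact ⟨τ, ⟨a, b, has, hbs, hab⟩,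
          happlyA τ (hzero _ his) rfl (fun j _ => Or.inl rfl)⟩



/-- If `B ∈ 𝒰^n`, `n ≥ 4`, contains `𝟙 - e_i` for all `i ≠ s₀` but
not `𝟙 - e_{s₀}`, then `B` is illuminated by a symmetric set of at most `2^n - 4`
directions, each with exactly one coordinate `±1` at an index `≠ s₀` and all
other coordinates `±δ`; in particular `𝕀(B) ≤ 2^n - 4`. -/
theorem stmt11 (n : ℕ) (hn : 4 ≤ n) (B : Set (Fin n → ℝ)) (hB : memU B)
    (s₀ : Fin n) (hin : ∀ i : Fin n, i ≠ s₀ → allOnes - stdB i ∈ B)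
    (hout : allOnes - stdB s₀ ∉ B) :
    ∃ δ : ℝ, 0 < δ ∧ δ < 1 ∧ ∃ D : Finset (Fin n → ℝ),
      (∀ d ∈ D, -d ∈ D) ∧ D.card ≤ 2 ^ n - 4 ∧
      (∀ d ∈ D, ∃ i : Fin n, i ≠ s₀ ∧ (d i = 1 ∨ d i = -1) ∧
        ∀ j, j ≠ i → d j = δ ∨ d j = -δ) ∧
      IlluminatesSet B ↑D ∧ illumNumber B ≤ 2 ^ n - 4 := by
  classical
  obtain ⟨δ, hδ0, hδ2, hsmall⟩ := s11_small hB s₀ hout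
  have h0n : 0 < n := by omega
  have h1n : 1 < n := by omega
  have h2n : 2 < n := by omega
  set p : Fin n := if s₀ = ⟨0, h0n⟩ then ⟨1, h1n⟩ else ⟨0, h0n⟩ with hpdef
  set q : Fin n := if (s₀ : ℕ) ≤ 1 then ⟨2, h2n⟩ else ⟨1, h1n⟩ with hqdef
  have hp : p ≠ s₀ := by
    rw [hpdef]
    split_ifs with h
    · rw [h]
      simp [Fin.ext_iff]
    · exact fun hh => h hh.symm
  have hq : q ≠ s₀ := by
    rw [hqdef]
    split_ifs with h
    · intro hh
      have := congrArg Fin.val hh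
      simp at this
      omega
    · intro hh
      have := congrArg Fin.val hh
      simp at this
      omega
  have hpq : p ≠ q := by
    rw [hpdef, hqdef]
    split_ifs with h1 h2 h2
    · simp [Fin.ext_iff]
    · exfalso
      rw [h1] at h2
      simp at h2
    · simp [Fin.ext_iff]
    · simp [Fin.ext_iff]
  have hwx : ∀ a b : Fin n, ∃ w, w ≠ s₀ ∧ w ≠ a ∧ w ≠ b := by
    intro a b
    have hcard : ({s₀, a, b} : Finset (Fin n)).card ≤ 3 := by
      calc ({s₀, a, b} : Finset (Fin n)).card
          ≤ ({a, b} : Finset (Fin n)).card + 1 := Finset.card_insert_le _ _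
        _ ≤ (({b} : Finset (Fin n)).card + 1) + 1 :=
            Nat.add_le_add_right (Finset.card_insert_le _ _) 1
        _ = 3 := by simp
    have hcompl : ((({s₀, a, b} : Finset (Fin n)))ᶜ).Nonempty := by
      rw [← Finset.card_pos, Finset.card_compl]
      have hcf : Fintype.card (Fin n) = n := Fintype.card_fin n
      omega
    obtain ⟨w, hw⟩ := hcompl
    simp only [Finset.mem_compl, Finset.mem_insert, Finset.mem_singleton] at hw
    push_neg at hw
    exact ⟨w, hw.1, hw.2.1, hw.2.2⟩
  set A : Finset (Fin n → Bool) :=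
    Finset.univ.filter (fun σ => ∃ j k, j ≠ s₀ ∧ k ≠ s₀ ∧ σ j ≠ σ k) with hAdef
  set D : Finset (Fin n → ℝ) := A.image (s11d s₀ p q δ) with hDdef
  -- cardinality of A
  have hAcard : A.card ≤ 2^n - 4 := by
    have hsplit := Finset.card_filter_add_card_filter_not
      (s := (Finset.univ : Finset (Fin n → Bool)))
      (p := fun σ => ∃ j k, j ≠ s₀ ∧ k ≠ s₀ ∧ σ j ≠ σ k)
    have huniv : (Finset.univ : Finset (Fin n → Bool)).card = 2^n := by
      rw [Finset.card_univ, Fintype.card_fun, Fintype.card_bool, Fintype.card_fin]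
    set gfun : Bool → Bool → (Fin n → Bool) :=
      fun a b => fun j => if j = s₀ then a else b with hg
    have hinj : Function.Injective (fun ab : Bool × Bool => gfun ab.1 ab.2) := by
      rintro ⟨a1, b1⟩ ⟨a2, b2⟩ h
      have h1 := congrFun h s₀
      have h2 := congrFun h p
      simp only [hg, if_pos rfl, if_neg hp] at h1 h2
      simp [h1, h2]
    have hbadcard : 4 ≤ (Finset.univ.filter
        (fun σ : Fin n → Bool => ¬ ∃ j k, j ≠ s₀ ∧ k ≠ s₀ ∧ σ j ≠ σ k)).card := by
      have hsub : (Finset.univ.image (fun ab : Bool × Bool => gfun ab.1 ab.2))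
          ⊆ Finset.univ.filter
            (fun σ : Fin n → Bool => ¬ ∃ j k, j ≠ s₀ ∧ k ≠ s₀ ∧ σ j ≠ σ k) := by
        intro σ hσ
        rw [Finset.mem_image] at hσ
        obtain ⟨ab, -, rfl⟩ := hσ
        refine Finset.mem_filter.mpr ⟨Finset.mem_univ _, ?_⟩
        rintro ⟨j, k, hjs, hks, hjk⟩
        apply hjk
        simp [hg, if_neg hjs, if_neg hks]
      calc 4 = (Finset.univ : Finset (Bool × Bool)).card := by decide
        _ = (Finset.univ.image (fun ab : Bool × Bool => gfun ab.1 ab.2)).card :=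
            (Finset.card_image_of_injective _ hinj).symm
        _ ≤ _ := Finset.card_le_card hsub
    have hpow : 16 ≤ 2^n := by
      calc (16:ℕ) = 2^4 := by norm_num
        _ ≤ 2^n := Nat.pow_le_pow_right (by norm_num) hn
    rw [huniv] at hsplit
    have hA_eq : A.card + (Finset.univ.filter
        (fun σ : Fin n → Bool => ¬ ∃ j k, j ≠ s₀ ∧ k ≠ s₀ ∧ σ j ≠ σ k)).card = 2^n :=
      hsplit
    refine (Nat.le_sub_iff_add_le (le_trans (by norm_num) hpow)).mpr ?_
    calc A.card + 4
        ≤ A.card + (Finset.univ.filter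
          (fun σ : Fin n → Bool => ¬ ∃ j k, j ≠ s₀ ∧ k ≠ s₀ ∧ σ j ≠ σ k)).card :=
          Nat.add_le_add_left hbadcard _
      _ = 2^n := hA_eq
  have hDcard : D.card ≤ 2^n - 4 := le_trans Finset.card_image_le hAcard
  have hDneg : ∀ d ∈ D, -d ∈ D := by
    intro d hd
    rw [hDdef, Finset.mem_image] at hd
    obtain ⟨σ, hσA, rfl⟩ := hd
    refine Finset.mem_image.mpr ⟨fun j => !σ j, ?_, s11d_neg _ _ _ _ _⟩
    rw [hAdef, Finset.mem_filter] at hσA ⊢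
    obtain ⟨-, j, k, hjs, hks, hjk⟩ := hσA
    refine ⟨Finset.mem_univ _, j, k, hjs, hks, ?_⟩
    cases hj : σ j <;> cases hk : σ k <;> simp_all
  have hDstruct : ∀ d ∈ D, ∃ i : Fin n, i ≠ s₀ ∧ (d i = 1 ∨ d i = -1) ∧
      ∀ j, j ≠ i → d j = δ ∨ d j = -δ := by
    intro d hd
    rw [hDdef, Finset.mem_image] at hd
    obtain ⟨σ, hσA, rfl⟩ := hd
    refine ⟨s11f s₀ p q σ, s11f_ne_s0 _ _ _ hp hq σ, ?_, ?_⟩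
    · unfold s11d
      rw [if_pos rfl, one_mul]
      cases σ (s11f s₀ p q σ) <;> simp [s11sv]
    · intro j hj
      unfold s11d
      rw [if_neg hj]
      cases σ j <;> simp [s11sv]
  have hIll : IlluminatesSet B ↑D := by
    intro x hxf
    have hxB : x ∈ B := hB.1.2.1.isClosed.frontier_subset hxf
    obtain ⟨σ, hσP, ε, hε, hmem⟩ :=
      s11_cover hB s₀ p q hp hq hpq hwx hin δ hδ0 hδ2 hsmall x hxB
    exact ⟨s11d s₀ p q δ σ,
      Finset.mem_coe.mpr (Finset.mem_image.mpr
        ⟨σ, Finset.mem_filter.mpr ⟨Finset.mem_univ σ, hσP⟩, rfl⟩),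
      ε, hε, hmem⟩
  have hD0 : ∀ d ∈ D, d ≠ 0 := by
    intro d hd h0
    obtain ⟨i, -, hdi, -⟩ := hDstruct d hd
    rw [h0] at hdi
    simp at hdi
  refine ⟨δ, hδ0, by linarith, D, hDneg, hDcard, hDstruct, hIll, ?_⟩
  have hmem : D.card ∈ {m | ∃ D' : Finset (Fin n → ℝ), D'.card = m ∧
      (∀ d ∈ D', d ≠ 0) ∧ IlluminatesSet B ↑D'} := ⟨D, rfl, hD0, hIll⟩
  exact le_trans (Nat.sInf_le hmem) hDcard
end
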